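/- arXiv:1110.0703 — 4 statements merged into one kernel-verified Lean document; each statement's English description precedes it below -/
import Mathlib

section
/- Let n ≥ 1 be an integer and λ ∈ ℝ with λ ≥ 0, and set μ := √(n² + λ). Then the function ψ₁(λ,ρ) := F((n−μ)/2, (n+μ)/2, n + 1/2, ρ²) is a solution of the radial equation on (0,1); that is, for every ρ ∈ (0,1) one has (1−ρ²)·ψ₁''(λ,ρ) + ((2n − (2n+1)ρ²)/ρ)·ψ₁'(λ,ρ) = −λ·ψ₁(λ,ρ), where primes denote derivatives in ρ. -/
open Set Filter
open scoped Topology Real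

/-- Pochhammer symbol `(d)_k = d(d+1)⋯(d+k−1)` over the reals. -/
noncomputable def poch (d : ℝ) (k : ℕ) : ℝ := Polynomial.eval d (ascPochhammer ℝ k)

/-- The `k`-th coefficient `(a)_k (b)_k / (k! (c)_k)` of the Gauss hypergeometric series. -/
noncomputable def hypCoeff (a b c : ℝ) (k : ℕ) : ℝ :=
  poch a k * poch b k / ((k.factorial : ℝ) * poch c k)

/-- The Gauss hypergeometric series `F(a,b,c,x) = Σ_k ((a)_k (b)_k / (k! (c)_k)) x^k`. -/
noncomputable def hypF (a b c x : ℝ) : ℝ := ∑' k : ℕ, hypCoeff a b c k * x ^ k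

/-- The first hypergeometric solution
`ψ₁(λ,ρ) = F((n−μ)/2, (n+μ)/2, n + 1/2, ρ²)` with `μ = √(n² + λ)`. -/
noncomputable def psi1 (n : ℕ) (lam ρ : ℝ) : ℝ :=
  hypF (((n : ℝ) - Real.sqrt ((n : ℝ) ^ 2 + lam)) / 2)
    (((n : ℝ) + Real.sqrt ((n : ℝ) ^ 2 + lam)) / 2) ((n : ℝ) + 1 / 2) (ρ ^ 2)

/-- The second hypergeometric solution
`ψ₂(λ,ρ) = ρ^{1−2n} F((1−n−μ)/2, (1−n+μ)/2, 3/2 − n, ρ²)` with `μ = √(n² + λ)`. -/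
noncomputable def psi2 (n : ℕ) (lam ρ : ℝ) : ℝ :=
  hypF ((1 - (n : ℝ) - Real.sqrt ((n : ℝ) ^ 2 + lam)) / 2)
    ((1 - (n : ℝ) + Real.sqrt ((n : ℝ) ^ 2 + lam)) / 2) (3 / 2 - (n : ℝ)) (ρ ^ 2)
    / ρ ^ (2 * n - 1)

/-- The radial equation
`(1−ρ²)·φ''(ρ) + ((2n − (2n+1)ρ²)/ρ)·φ'(ρ) = −λ·φ(ρ)` at the point `ρ`. -/
def RadialEq (n : ℕ) (lam : ℝ) (φ : ℝ → ℝ) (ρ : ℝ) : Prop :=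
  (1 - ρ ^ 2) * deriv (deriv φ) ρ
    + ((2 * (n : ℝ) - (2 * (n : ℝ) + 1) * ρ ^ 2) / ρ) * deriv φ ρ = -lam * φ ρ

/-! ### Auxiliary lemmas -/

lemma poch_zero (d : ℝ) : poch d 0 = 1 := by simp [poch]

lemma poch_succ (d : ℝ) (k : ℕ) : poch d (k+1) = poch d k * (d + k) := by
  simp [poch, ascPochhammer_succ_right]

lemma poch_pos {c : ℝ} (hc : 0 < c) (k : ℕ) : 0 < poch c k := by
  induction k with
  | zero => simp [poch_zero]
  | succ k ih => rw [poch_succ]; exact mul_pos ih (by positivity)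

lemma hypCoeff_zero (a b c : ℝ) : hypCoeff a b c 0 = 1 := by
  simp [hypCoeff, poch_zero]

lemma hypCoeff_rec (a b : ℝ) {c : ℝ} (hc : 0 < c) (k : ℕ) :
    hypCoeff a b c (k+1) * (((k:ℝ)+1) * (c + k)) = hypCoeff a b c k * ((a + k) * (b + k)) := by
  have h1 : (0:ℝ) < poch c k := poch_pos hc k
  have h2 : (0:ℝ) < (k.factorial : ℝ) := by positivity
  have h3 : (0:ℝ) < c + k := by positivity
  rw [hypCoeff, hypCoeff, poch_succ, poch_succ, poch_succ, Nat.factorial_succ]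
  push_cast
  field_simp

lemma hypCoeff_bound {a b c : ℝ} (ha : a ≤ 0) (hb : 1 ≤ b) (hc : 1 ≤ c)
    {m : ℕ} (hm1 : -a + b ≤ m) (hm2 : -a * b ≤ m) (k : ℕ) :
    |hypCoeff a b c k| ≤ ((k:ℝ)+1)^m := by
  induction k with
  | zero => simp [hypCoeff_zero]
  | succ k ih =>
    have hc0 : (0:ℝ) < c := by linarith
    have hck : (0:ℝ) < c + k := by positivity
    have hk1 : (0:ℝ) < (k:ℝ) + 1 := by positivity
    have hrec := hypCoeff_rec a b hc0 k
    have habs : |hypCoeff a b c (k+1)| * (((k:ℝ)+1) * (c + k))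
        ≤ ((k:ℝ)+1)^m * (((k:ℝ) - a) * ((k:ℝ) + b)) := by
      have : |hypCoeff a b c (k+1)| * (((k:ℝ)+1) * (c + k))
          = |hypCoeff a b c k| * |(a + k) * (b + k)| := by
        rw [← abs_of_pos (mul_pos hk1 hck), ← abs_mul, hrec, abs_mul]
      rw [this]
      have h1 : |(a + (k:ℝ)) * (b + k)| ≤ ((k:ℝ) - a) * ((k:ℝ) + b) := by
        rw [abs_mul]
        have : |a + (k:ℝ)| ≤ (k:ℝ) - a := by
          rw [abs_le]; constructor <;> nlinarith
        have hb' : |b + (k:ℝ)| = (k:ℝ) + b := by rw [abs_of_pos (by positivity)]; ring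
        rw [hb']
        exact mul_le_mul this le_rfl (by positivity) (by nlinarith)
      exact mul_le_mul ih h1 (abs_nonneg _) (by positivity)
    have hkey : ((k:ℝ) - a) * ((k:ℝ) + b) ≤ ((k:ℝ) + 1 + m) * (c + k) := by
      nlinarith [hk1, Nat.cast_nonneg (α := ℝ) k]
    have hbern : (1 + (m:ℝ) * (1/((k:ℝ)+1))) ≤ (1 + 1/((k:ℝ)+1))^m :=
      one_add_mul_le_pow (le_trans (by norm_num : (-2:ℝ) ≤ 0) (by positivity)) m
    have hfin : ((k:ℝ)+1)^m * ((k:ℝ) + 1 + m) ≤ ((k:ℝ)+2)^m * ((k:ℝ)+1) := by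
      have h2 : ((k:ℝ)+1) * (1 + 1/((k:ℝ)+1)) = (k:ℝ)+2 := by field_simp; ring
      have hmul : ((k:ℝ)+1) * (1 + (m:ℝ) * (1/((k:ℝ)+1))) = (k:ℝ)+1+m := by field_simp
      calc ((k:ℝ)+1)^m * ((k:ℝ) + 1 + m)
          = ((k:ℝ)+1)^m * (((k:ℝ)+1) * (1 + (m:ℝ) * (1/((k:ℝ)+1)))) := by rw [hmul]
        _ ≤ ((k:ℝ)+1)^m * (((k:ℝ)+1) * (1 + 1/((k:ℝ)+1))^m) := by
            apply mul_le_mul_of_nonneg_left _ (by positivity)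
            exact mul_le_mul_of_nonneg_left hbern (by positivity)
        _ = (((k:ℝ)+1) * (1 + 1/((k:ℝ)+1)))^m * ((k:ℝ)+1) := by rw [mul_pow]; ring
        _ = ((k:ℝ)+2)^m * ((k:ℝ)+1) := by rw [h2]
    have hcomb : |hypCoeff a b c (k+1)| * (((k:ℝ)+1) * (c + k))
        ≤ ((k:ℝ)+2)^m * (((k:ℝ)+1) * (c+k)) := by
      calc |hypCoeff a b c (k+1)| * (((k:ℝ)+1) * (c + k))
          ≤ ((k:ℝ)+1)^m * (((k:ℝ) - a) * ((k:ℝ) + b)) := habs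
        _ ≤ ((k:ℝ)+1)^m * (((k:ℝ) + 1 + m) * (c + k)) :=
            mul_le_mul_of_nonneg_left hkey (by positivity)
        _ = (((k:ℝ)+1)^m * ((k:ℝ) + 1 + m)) * (c + k) := by ring
        _ ≤ (((k:ℝ)+2)^m * ((k:ℝ)+1)) * (c + k) := mul_le_mul_of_nonneg_right hfin hck.le
        _ = ((k:ℝ)+2)^m * (((k:ℝ)+1) * (c+k)) := by ring
    have hfinal := le_of_mul_le_mul_right
      (by linarith [hcomb] : |hypCoeff a b c (k+1)| * (((k:ℝ)+1)*(c+k))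
        ≤ ((k:ℝ)+2)^m * (((k:ℝ)+1)*(c+k))) (by positivity)
    convert hfinal using 2
    · rfl
    push_cast
    ring

lemma summable_pow_abs {x : ℝ} (hx : |x| < 1) (p : ℕ) :
    Summable (fun k : ℕ => ((k:ℝ)+1)^p * |x|^k) := by
  have hbase : Summable (fun k : ℕ => ((k:ℝ))^p * |x|^k) :=
    summable_pow_mul_geometric_of_norm_lt_one p (by rwa [Real.norm_eq_abs, abs_abs])
  have hshift : Summable (fun k : ℕ => (((k:ℕ)+1:ℝ))^p * |x|^(k+1)) := by
    have := (summable_nat_add_iff 1).2 hbase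
    simpa using this
  rcases eq_or_ne x 0 with h0 | h0
  · subst h0
    apply summable_of_ne_finset_zero (s := {0})
    intro k hk
    simp only [Finset.mem_singleton] at hk
    simp [zero_pow, hk]
  · have hx0 : (0:ℝ) < |x| := abs_pos.2 h0
    have := hshift.mul_left (|x|⁻¹)
    apply this.congr
    intro k
    field_simp
    ring

lemma summable_coeff {d : ℕ → ℝ} {C : ℝ} {p : ℕ}
    (hd : ∀ k, |d k| ≤ C * ((k:ℝ)+1)^p) {x : ℝ} (hx : |x| < 1) :
    Summable (fun k : ℕ => d k * x^k) := by
  apply Summable.of_abs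
  refine Summable.of_nonneg_of_le (fun k => abs_nonneg _) (fun k => ?_)
    ((summable_pow_abs hx p).mul_left C)
  rw [abs_mul, abs_pow]
  calc |d k| * |x|^k ≤ (C * ((k:ℝ)+1)^p) * |x|^k :=
        mul_le_mul_of_nonneg_right (hd k) (by positivity)
    _ = C * (((k:ℝ)+1)^p * |x|^k) := by ring

lemma hasDerivAt_series {d : ℕ → ℝ} {C : ℝ} {p : ℕ}
    (hd : ∀ k, |d k| ≤ C * ((k:ℝ)+1)^p) {x : ℝ} (hx : |x| < 1) :
    HasDerivAt (fun z : ℝ => ∑' k : ℕ, d k * z^k)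
      (∑' k : ℕ, (d (k+1) * ((k:ℝ)+1)) * x^k) x := by
  have hC : 0 ≤ C := le_trans (abs_nonneg _) (by simpa using hd 0)
  set r : ℝ := (|x| + 1) / 2 with hr
  have hr0 : 0 < r := by positivity
  have hxr : |x| < r := by simp only [hr]; linarith [abs_nonneg x]
  have hr1 : r < 1 := by simp only [hr]; linarith
  have hrabs : |r| < 1 := by rw [abs_of_pos hr0]; exact hr1
  have hu : Summable (fun k : ℕ => (C/r) * (((k:ℝ)+1)^(p+1) * r^k)) := by
    have := (summable_pow_abs hrabs (p+1)).mul_left (C/r)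
    simpa [abs_of_pos hr0] using this
  have hrk : ∀ k : ℕ, r^(k-1) ≤ r^k / r := by
    intro k
    cases k with
    | zero =>
      simp only [Nat.zero_sub, pow_zero]
      rw [le_div_iff₀ hr0]
      simpa using hr1.le
    | succ k =>
      rw [Nat.succ_sub_one, pow_succ, mul_div_assoc, div_self hr0.ne', mul_one]
  have hbound : ∀ y : ℝ, |y| ≤ r → ∀ k : ℕ,
      |d k * ((k:ℝ) * y^(k-1))| ≤ C/r * (((k:ℝ)+1)^(p+1) * r^k) := by
    intro y hy k
    rw [abs_mul, abs_mul, abs_pow]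
    have h1 : |(k:ℝ)| ≤ (k:ℝ)+1 := by
      rw [abs_of_nonneg (Nat.cast_nonneg k)]; linarith
    have h2 : |y|^(k-1) ≤ r^(k-1) := pow_le_pow_left₀ (abs_nonneg y) hy _
    calc |d k| * (|(k:ℝ)| * |y|^(k-1))
        ≤ (C * ((k:ℝ)+1)^p) * (((k:ℝ)+1) * r^(k-1)) := by
          apply mul_le_mul (hd k) _ (by positivity) (by positivity)
          exact mul_le_mul h1 h2 (by positivity) (by positivity)
      _ ≤ (C * ((k:ℝ)+1)^p) * (((k:ℝ)+1) * (r^k / r)) := by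
          apply mul_le_mul_of_nonneg_left _ (by positivity)
          exact mul_le_mul_of_nonneg_left (hrk k) (by positivity)
      _ = C/r * (((k:ℝ)+1)^(p+1) * r^k) := by rw [pow_succ]; ring
  have hmem : x ∈ Metric.ball (0:ℝ) r := by
    simpa [Real.dist_eq] using hxr
  have key := hasDerivAt_tsum_of_isPreconnected hu Metric.isOpen_ball
    (convex_ball (0:ℝ) r).isPreconnected
    (g := fun k z => d k * z^k) (g' := fun k z => d k * ((k:ℝ) * z^(k-1)))
    (fun k y _ => (hasDerivAt_pow k y).const_mul (d k))
    ?_ hmem (summable_coeff hd hx) hmem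
  · have hsum : Summable (fun k : ℕ => d k * ((k:ℝ) * x^(k-1))) := by
      apply Summable.of_abs
      exact Summable.of_nonneg_of_le (fun k => abs_nonneg _) (hbound x hxr.le) hu
    have heq : ∑' k : ℕ, d k * ((k:ℝ) * x^(k-1)) = ∑' k : ℕ, (d (k+1) * ((k:ℝ)+1)) * x^k := by
      rw [Summable.tsum_eq_zero_add hsum]
      simp only [Nat.cast_zero, zero_mul, mul_zero, zero_add]
      congr 1
      funext k
      push_cast
      ring_nf
    rwa [heq] at key
  · intro k y hy
    have hyr : |y| ≤ r := by
      have : dist y 0 < r := Metric.mem_ball.1 hy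
      rw [Real.dist_eq, sub_zero] at this
      exact this.le
    rw [Real.norm_eq_abs]
    exact hbound y hyr k

/-- Coefficients of the derivative series. -/
noncomputable def hcoef1 (a b c : ℝ) (k : ℕ) : ℝ := hypCoeff a b c (k+1) * ((k:ℝ)+1)

/-- Coefficients of the second derivative series. -/
noncomputable def hcoef2 (a b c : ℝ) (k : ℕ) : ℝ := hcoef1 a b c (k+1) * ((k:ℝ)+1)

noncomputable def hypF1 (a b c x : ℝ) : ℝ := ∑' k : ℕ, hcoef1 a b c k * x^k
noncomputable def hypF2 (a b c x : ℝ) : ℝ := ∑' k : ℕ, hcoef2 a b c k * x^k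

lemma hypCoeff_bound_ex {a b c : ℝ} (ha : a ≤ 0) (hb : 1 ≤ b) (hc : 1 ≤ c) :
    ∃ p : ℕ, ∀ k, |hypCoeff a b c k| ≤ 1 * ((k:ℝ)+1)^p := by
  have h1 : (0:ℝ) ≤ -a := by linarith
  have h2 : (0:ℝ) ≤ b := by linarith
  refine ⟨⌈-a + b + (-a)*b⌉₊, fun k => ?_⟩
  rw [one_mul]
  refine hypCoeff_bound ha hb hc ?_ ?_ k
  · exact le_trans (by nlinarith) (Nat.le_ceil _)
  · exact le_trans (by nlinarith) (Nat.le_ceil _)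

lemma bound_shift {d : ℕ → ℝ} {C : ℝ} {p : ℕ}
    (hd : ∀ k, |d k| ≤ C * ((k:ℝ)+1)^p) (k : ℕ) :
    |d (k+1) * ((k:ℝ)+1)| ≤ (C * 2^p) * ((k:ℝ)+1)^(p+1) := by
  have hC : 0 ≤ C := le_trans (abs_nonneg _) (by simpa using hd 0)
  have hk1 : (0:ℝ) < (k:ℝ)+1 := by positivity
  rw [abs_mul, abs_of_pos hk1]
  have h1 : |d (k+1)| ≤ C * ((k:ℝ)+2)^p := by
    have := hd (k+1)
    push_cast at this
    calc |d (k+1)| ≤ C * (((k:ℝ)+1)+1)^p := this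
      _ = C * ((k:ℝ)+2)^p := by ring_nf
  have h2 : ((k:ℝ)+2)^p ≤ (2*((k:ℝ)+1))^p :=
    pow_le_pow_left₀ (by positivity) (by linarith) p
  calc |d (k+1)| * ((k:ℝ)+1) ≤ (C * ((k:ℝ)+2)^p) * ((k:ℝ)+1) :=
        mul_le_mul_of_nonneg_right h1 hk1.le
    _ ≤ (C * (2*((k:ℝ)+1))^p) * ((k:ℝ)+1) := by
        apply mul_le_mul_of_nonneg_right _ hk1.le
        exact mul_le_mul_of_nonneg_left h2 hC
    _ = (C * 2^p) * ((k:ℝ)+1)^(p+1) := by rw [mul_pow, pow_succ]; ring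

lemma hypF_hasDerivAt {a b c : ℝ} (ha : a ≤ 0) (hb : 1 ≤ b) (hc : 1 ≤ c)
    {x : ℝ} (hx : |x| < 1) : HasDerivAt (hypF a b c) (hypF1 a b c x) x := by
  obtain ⟨p, hbd⟩ := hypCoeff_bound_ex ha hb hc
  exact hasDerivAt_series hbd hx

lemma hypF1_hasDerivAt {a b c : ℝ} (ha : a ≤ 0) (hb : 1 ≤ b) (hc : 1 ≤ c)
    {x : ℝ} (hx : |x| < 1) : HasDerivAt (hypF1 a b c) (hypF2 a b c x) x := by
  obtain ⟨p, hbd⟩ := hypCoeff_bound_ex ha hb hc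
  exact hasDerivAt_series (d := hcoef1 a b c) (fun k => bound_shift hbd k) hx

lemma hyp_ode {a b c x : ℝ} (ha : a ≤ 0) (hb : 1 ≤ b) (hc : 1 ≤ c) (hx : |x| < 1) :
    x * (1-x) * hypF2 a b c x + (c - (a+b+1)*x) * hypF1 a b c x
      - (a*b) * hypF a b c x = 0 := by
  have hc0 : (0:ℝ) < c := by linarith
  obtain ⟨p, hbd⟩ := hypCoeff_bound_ex ha hb hc
  have hbd1 : ∀ k, |hcoef1 a b c k| ≤ (1 * 2^p) * ((k:ℝ)+1)^(p+1) :=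
    fun k => bound_shift hbd k
  have hbd2 : ∀ k, |hcoef2 a b c k| ≤ ((1 * 2^p) * 2^(p+1)) * ((k:ℝ)+1)^(p+2) :=
    fun k => bound_shift hbd1 k
  have h0 : HasSum (fun k : ℕ => hypCoeff a b c k * x^k) (hypF a b c x) :=
    (summable_coeff hbd hx).hasSum
  have h1 : HasSum (fun k : ℕ => hcoef1 a b c k * x^k) (hypF1 a b c x) :=
    (summable_coeff hbd1 hx).hasSum
  have h2 : HasSum (fun k : ℕ => hcoef2 a b c k * x^k) (hypF2 a b c x) :=
    (summable_coeff hbd2 hx).hasSum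
  -- A : x * F2 as sum of (hcoef1 k * k) x^k
  have hA : HasSum (fun k : ℕ => (hcoef1 a b c k * (k:ℝ)) * x^k) (x * hypF2 a b c x) := by
    have hx2 := h2.mul_left x
    have heq : (fun k : ℕ => x * (hcoef2 a b c k * x^k))
        = fun k : ℕ => (hcoef1 a b c (k+1) * (((k+1:ℕ)):ℝ)) * x^(k+1) := by
      funext k
      simp only [hcoef2]
      push_cast
      ring
    rw [heq] at hx2
    have := (hasSum_nat_add_iff (f := fun k : ℕ => (hcoef1 a b c k * (k:ℝ)) * x^k) 1).1 hx2
    simpa using this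
  -- B : x^2 * F2 as sum of (hypCoeff k * k(k-1)) x^k
  have hB : HasSum (fun k : ℕ => (hypCoeff a b c k * ((k:ℝ) * ((k:ℝ)-1))) * x^k)
      (x^2 * hypF2 a b c x) := by
    have hx2 := h2.mul_left (x^2)
    have heq : (fun k : ℕ => x^2 * (hcoef2 a b c k * x^k))
        = fun k : ℕ => (hypCoeff a b c (k+2) * ((((k+2:ℕ)):ℝ) * ((((k+2:ℕ)):ℝ)-1))) * x^(k+2) := by
      funext k
      simp only [hcoef2, hcoef1]
      push_cast
      ring
    rw [heq] at hx2
    have := (hasSum_nat_add_iff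
      (f := fun k : ℕ => (hypCoeff a b c k * ((k:ℝ) * ((k:ℝ)-1))) * x^k) 2).1 hx2
    simpa [Finset.sum_range_succ] using this
  -- C : x * F1 as sum of (hypCoeff k * k) x^k
  have hC : HasSum (fun k : ℕ => (hypCoeff a b c k * (k:ℝ)) * x^k) (x * hypF1 a b c x) := by
    have hx1 := h1.mul_left x
    have heq : (fun k : ℕ => x * (hcoef1 a b c k * x^k))
        = fun k : ℕ => (hypCoeff a b c (k+1) * (((k+1:ℕ)):ℝ)) * x^(k+1) := by
      funext k
      simp only [hcoef1]
      push_cast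
      ring
    rw [heq] at hx1
    have := (hasSum_nat_add_iff (f := fun k : ℕ => (hypCoeff a b c k * (k:ℝ)) * x^k) 1).1 hx1
    simpa using this
  have htot := ((hA.sub hB).add ((h1.mul_left c).sub (hC.mul_left (a+b+1)))).sub
    (h0.mul_left (a*b))
  have hzero : (fun k : ℕ =>
      ((hcoef1 a b c k * (k:ℝ)) * x^k - (hypCoeff a b c k * ((k:ℝ) * ((k:ℝ)-1))) * x^k
        + (c * (hcoef1 a b c k * x^k) - (a+b+1) * ((hypCoeff a b c k * (k:ℝ)) * x^k)))
        - (a*b) * (hypCoeff a b c k * x^k)) = fun _ => (0:ℝ) := by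
    funext k
    have hrec := hypCoeff_rec a b hc0 k
    simp only [hcoef1]
    linear_combination x^k * hrec
  rw [hzero] at htot
  have hS : x * hypF2 a b c x - x^2 * hypF2 a b c x
      + (c * hypF1 a b c x - (a+b+1) * (x * hypF1 a b c x))
      - (a*b) * hypF a b c x = 0 := htot.unique hasSum_zero
  linear_combination hS

/-- `ψ₁(λ,·)` solves the radial equation on `(0,1)`. -/
theorem psi1_solves_radialEq (n : ℕ) (hn : 1 ≤ n) (lam : ℝ) (hlam : 0 ≤ lam) :
    ∀ ρ ∈ Set.Ioo (0 : ℝ) 1, RadialEq n lam (psi1 n lam) ρ := by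
  intro ρ hρ
  obtain ⟨hρ0, hρ1⟩ := hρ
  have hn1 : (1:ℝ) ≤ (n:ℝ) := by exact_mod_cast hn
  set μ : ℝ := Real.sqrt ((n:ℝ)^2 + lam) with hμ_def
  set a : ℝ := ((n:ℝ) - μ)/2 with ha_def
  set b : ℝ := ((n:ℝ) + μ)/2 with hb_def
  set c : ℝ := (n:ℝ) + 1/2 with hc_def
  have hμ2 : μ^2 = (n:ℝ)^2 + lam := Real.sq_sqrt (by positivity)
  have hμn : (n:ℝ) ≤ μ := by
    rw [hμ_def]
    calc (n:ℝ) = Real.sqrt ((n:ℝ)^2) := (Real.sqrt_sq (by positivity)).symm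
      _ ≤ Real.sqrt ((n:ℝ)^2 + lam) := Real.sqrt_le_sqrt (by linarith)
  have ha : a ≤ 0 := by rw [ha_def]; linarith
  have hb : 1 ≤ b := by rw [hb_def]; linarith
  have hc : 1 ≤ c := by rw [hc_def]; linarith
  have hρ2 : |ρ^2| < 1 := by
    rw [abs_of_pos (by positivity)]
    nlinarith
  have hpsi : psi1 n lam = fun t : ℝ => hypF a b c (t^2) := by
    funext t
    rw [psi1, ha_def, hb_def, hc_def, hμ_def]
  have hρmem : ρ ∈ Set.Ioo (-1:ℝ) 1 := ⟨by linarith, hρ1⟩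
  have hasD : ∀ t ∈ Set.Ioo (-1:ℝ) 1,
      HasDerivAt (psi1 n lam) (2*t*hypF1 a b c (t^2)) t := by
    intro t ht
    have ht2 : |t^2| < 1 := by
      rw [abs_of_nonneg (sq_nonneg t)]
      nlinarith [ht.1, ht.2]
    have hsq : HasDerivAt (fun u : ℝ => u^2) (2*t) t := by
      simpa using hasDerivAt_pow 2 t
    have := HasDerivAt.comp (h := fun u : ℝ => u^2) t (hypF_hasDerivAt ha hb hc ht2) hsq
    rw [hpsi]
    simpa [mul_comm, Function.comp_def] using this
  have hderiv1 : Set.EqOn (deriv (psi1 n lam)) (fun t => 2*t*hypF1 a b c (t^2))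
      (Set.Ioo (-1:ℝ) 1) := fun t ht => (hasD t ht).deriv
  have hev : deriv (psi1 n lam) =ᶠ[𝓝 ρ] (fun t => 2*t*hypF1 a b c (t^2)) :=
    Filter.eventuallyEq_of_mem (isOpen_Ioo.mem_nhds hρmem) hderiv1
  have hD2 : HasDerivAt (fun t : ℝ => 2*t*hypF1 a b c (t^2))
      (2 * hypF1 a b c (ρ^2) + (2*ρ) * (hypF2 a b c (ρ^2) * (2*ρ))) ρ := by
    have hlin : HasDerivAt (fun t : ℝ => 2*t) 2 ρ := by
      simpa using (hasDerivAt_id ρ).const_mul (2:ℝ)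
    have hsq : HasDerivAt (fun u : ℝ => u^2) (2*ρ) ρ := by
      simpa using hasDerivAt_pow 2 ρ
    have hcomp : HasDerivAt (fun t : ℝ => hypF1 a b c (t^2))
        (hypF2 a b c (ρ^2) * (2*ρ)) ρ :=
      HasDerivAt.comp (h := fun u : ℝ => u^2) ρ (hypF1_hasDerivAt ha hb hc hρ2) hsq
    simpa [Pi.mul_def] using hlin.mul hcomp
  have h2nd : deriv (deriv (psi1 n lam)) ρ
      = 2 * hypF1 a b c (ρ^2) + (2*ρ) * (hypF2 a b c (ρ^2) * (2*ρ)) := by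
    rw [hev.deriv_eq]
    exact hD2.deriv
  have h1st : deriv (psi1 n lam) ρ = 2*ρ*hypF1 a b c (ρ^2) := (hasD ρ hρmem).deriv
  have key := hyp_ode ha hb hc hρ2
  have hab : a + b = (n:ℝ) := by rw [ha_def, hb_def]; ring
  have habm : a * b = -(lam/4) := by
    rw [ha_def, hb_def]
    linear_combination (-(1:ℝ)/4) * hμ2
  rw [RadialEq, h2nd, h1st, hpsi]
  have hρne : ρ ≠ 0 := ne_of_gt hρ0
  field_simp
  linear_combination 4 * key + (4*ρ^2*hypF1 a b c (ρ^2)) * hab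
    + (4*hypF a b c (ρ^2)) * habm - (4*hypF1 a b c (ρ^2)) * hc_def
end

section
/- Let n ≥ 1 be an integer and λ ∈ ℝ with λ ≥ 0, and set μ := √(n² + λ). Then the function ψ₂(λ,ρ) := ρ^{1−2n} · F((1−n−μ)/2, (1−n+μ)/2, 3/2 − n, ρ²) is a solution of the radial equation on (0,1); that is, for every ρ ∈ (0,1) one has (1−ρ²)·ψ₂''(λ,ρ) + ((2n − (2n+1)ρ²)/ρ)·ψ₂'(λ,ρ) = −λ·ψ₂(λ,ρ), where primes denote derivatives in ρ. -/
open Set Filter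
open scoped Topology Real

lemma poch_ne {c : ℝ} (hc : ∀ k : ℕ, c + (k:ℝ) ≠ 0) (k : ℕ) : poch c k ≠ 0 := by
  induction k with
  | zero => simp [poch]
  | succ k ih => rw [poch_succ]; exact mul_ne_zero ih (hc k)

lemma hyp_rec (a b : ℝ) {c : ℝ} (hc : ∀ k : ℕ, c + (k:ℝ) ≠ 0) (k : ℕ) :
    ((k:ℝ)+1) * (c+(k:ℝ)) * hypCoeff a b c (k+1) = (a+(k:ℝ)) * (b+(k:ℝ)) * hypCoeff a b c k := by
  unfold hypCoeff
  rw [poch_succ, poch_succ, poch_succ, Nat.factorial_succ]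
  have h1 := poch_ne hc k
  have h2 : (k.factorial : ℝ) ≠ 0 := Nat.cast_ne_zero.2 k.factorial_ne_zero
  have h3 := hc k
  have h4 : ((k:ℝ)+1) ≠ 0 := by positivity
  push_cast
  field_simp

lemma hyp_rec_div (a b : ℝ) {c : ℝ} (hc : ∀ k : ℕ, c + (k:ℝ) ≠ 0) (k : ℕ) :
    hypCoeff a b c (k+1) = (a+(k:ℝ)) * (b+(k:ℝ)) / (((k:ℝ)+1) * (c+(k:ℝ))) * hypCoeff a b c k := by
  have h4 : ((k:ℝ)+1) ≠ 0 := by positivity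
  have h3 := hc k
  have h := hyp_rec a b hc k
  field_simp
  linear_combination h

lemma tendsto_shift (d e : ℝ) :
    Tendsto (fun k : ℕ => (d + (k:ℝ)) / (e + (k:ℝ))) atTop (𝓝 1) := by
  have h1 : Tendsto (fun k : ℕ => e + (k:ℝ)) atTop atTop :=
    tendsto_atTop_add_const_left _ e tendsto_natCast_atTop_atTop
  have h2 : Tendsto (fun k : ℕ => (d - e) / (e + (k:ℝ))) atTop (𝓝 0) :=
    Tendsto.div_atTop tendsto_const_nhds h1
  have h3 : Tendsto (fun k : ℕ => 1 + (d - e) / (e + (k:ℝ))) atTop (𝓝 (1 + 0)) :=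
    h2.const_add 1
  rw [add_zero] at h3
  apply h3.congr'
  filter_upwards [h1.eventually_gt_atTop 0] with k hk
  have : e + (k:ℝ) ≠ 0 := ne_of_gt hk
  field_simp
  ring

lemma tendsto_q (a b c : ℝ) (hc : ∀ k : ℕ, c + (k:ℝ) ≠ 0) :
    Tendsto (fun k : ℕ => |(a+(k:ℝ)) * (b+(k:ℝ)) / (((k:ℝ)+1) * (c+(k:ℝ)))|) atTop (𝓝 1) := by
  have h : Tendsto (fun k : ℕ => (a+(k:ℝ))/(1+(k:ℝ)) * ((b+(k:ℝ))/(c+(k:ℝ)))) atTop (𝓝 (1*1)) :=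
    (tendsto_shift a 1).mul (tendsto_shift b c)
  rw [one_mul] at h
  have h' : Tendsto (fun k : ℕ => (a+(k:ℝ)) * (b+(k:ℝ)) / (((k:ℝ)+1) * (c+(k:ℝ)))) atTop (𝓝 1) := by
    apply h.congr
    intro k
    have h4 : (1:ℝ) + (k:ℝ) ≠ 0 := by positivity
    have h3 := hc k
    rw [div_mul_div_comm]
    congr 1
    ring
  simpa using h'.abs

lemma summable_ratio {f R : ℕ → ℝ} {L : ℝ} (hL : L < 1)
    (hR : Tendsto R atTop (𝓝 L)) (hb : ∀ᶠ k in atTop, |f (k+1)| ≤ R k * |f k|) :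
    Summable f := by
  apply summable_of_ratio_norm_eventually_le (r := (L+1)/2) (by linarith)
  filter_upwards [hb, hR.eventually_lt_const (show L < (L+1)/2 by linarith)] with k h1 h2
  calc ‖f (k+1)‖ = |f (k+1)| := rfl
    _ ≤ R k * |f k| := h1
    _ ≤ (L+1)/2 * |f k| := mul_le_mul_of_nonneg_right h2.le (abs_nonneg _)

section Summ
variable (a b : ℝ) {c : ℝ} (hc : ∀ k : ℕ, c + (k:ℝ) ≠ 0)

noncomputable def qr (a b c : ℝ) (k : ℕ) : ℝ := |(a+(k:ℝ)) * (b+(k:ℝ)) / (((k:ℝ)+1) * (c+(k:ℝ)))|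

include hc in
lemma abs_hyp_succ (k : ℕ) :
    |hypCoeff a b c (k+1)| = qr a b c k * |hypCoeff a b c k| := by
  rw [hyp_rec_div a b hc k, abs_mul, qr]

include hc in
lemma summable_C {r : ℝ} (h0 : 0 ≤ r) (h1 : r < 1) :
    Summable (fun k => |hypCoeff a b c k| * r ^ k) := by
  apply summable_ratio (R := fun k : ℕ => qr a b c k * r) (L := r) h1
  · simpa [qr] using ((tendsto_q a b c hc).mul_const r)
  · filter_upwards with k
    have e1 : ∀ j : ℕ, |(|hypCoeff a b c j| * r ^ j)| = |hypCoeff a b c j| * r ^ j := by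
      intro j; apply abs_of_nonneg; positivity
    rw [e1, e1, abs_hyp_succ a b hc k, pow_succ]
    apply le_of_eq; ring

include hc in
lemma summable_D {r : ℝ} (h0 : 0 ≤ r) (h1 : r < 1) :
    Summable (fun k : ℕ => ((k:ℝ)+1) * |hypCoeff a b c (k+1)| * r ^ k) := by
  apply summable_ratio (R := fun k : ℕ => ((2+(k:ℝ))/(1+(k:ℝ))) * qr a b c (k+1) * r) (L := r) h1
  · have t1 : Tendsto (fun k : ℕ => qr a b c (k+1)) atTop (𝓝 1) :=
      (tendsto_q a b c hc).comp (tendsto_add_atTop_nat 1)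
    have := ((tendsto_shift 2 1).mul t1).mul_const r
    simpa using this
  · filter_upwards with k
    have hk1 : (0:ℝ) < 1 + (k:ℝ) := by positivity
    have e1 : ∀ j : ℕ, |((j:ℝ)+1) * |hypCoeff a b c (j+1)| * r ^ j| =
        ((j:ℝ)+1) * |hypCoeff a b c (j+1)| * r ^ j := by
      intro j; apply abs_of_nonneg; positivity
    rw [e1, e1]
    have h2 := abs_hyp_succ a b hc (k+1)
    push_cast at h2 ⊢
    rw [h2, pow_succ, div_mul_eq_mul_div, div_mul_eq_mul_div, div_mul_eq_mul_div, le_div_iff₀ hk1]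
    apply le_of_eq; ring

include hc in
lemma summable_E {r : ℝ} (h0 : 0 ≤ r) (h1 : r < 1) :
    Summable (fun k : ℕ => ((k:ℝ)+1) * (((k:ℝ)+2) * |hypCoeff a b c (k+2)|) * r ^ k) := by
  apply summable_ratio (R := fun k : ℕ => ((3+(k:ℝ))/(1+(k:ℝ))) * qr a b c (k+2) * r) (L := r) h1
  · have t1 : Tendsto (fun k : ℕ => qr a b c (k+2)) atTop (𝓝 1) :=
      (tendsto_q a b c hc).comp (tendsto_add_atTop_nat 2)
    have := ((tendsto_shift 3 1).mul t1).mul_const r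
    simpa using this
  · filter_upwards with k
    have hk1 : (0:ℝ) < 1 + (k:ℝ) := by positivity
    have e1 : ∀ j : ℕ, |((j:ℝ)+1) * (((j:ℝ)+2) * |hypCoeff a b c (j+2)|) * r ^ j| =
        ((j:ℝ)+1) * (((j:ℝ)+2) * |hypCoeff a b c (j+2)|) * r ^ j := by
      intro j; apply abs_of_nonneg; positivity
    rw [e1, e1]
    have h2 := abs_hyp_succ a b hc (k+2)
    push_cast at h2 ⊢
    rw [h2, pow_succ, div_mul_eq_mul_div, div_mul_eq_mul_div, div_mul_eq_mul_div, le_div_iff₀ hk1]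
    apply le_of_eq; ring

end Summ

lemma hasSum_shift {w : ℕ → ℝ} {s : ℝ} (h0 : w 0 = 0)
    (h : HasSum (fun k => w (k+1)) s) : HasSum w s := by
  have := (hasSum_nat_add_iff (f := w) 1).mp h
  simpa [h0] using this

lemma deriv_powser {A : ℕ → ℝ}
    (hA' : ∀ r : ℝ, 0 ≤ r → r < 1 → Summable (fun k : ℕ => ((k:ℝ)+1) * |A (k+1)| * r ^ k))
    {x : ℝ} (hx : |x| < 1) :
    HasDerivAt (fun y => ∑' k : ℕ, A k * y ^ k) (∑' k : ℕ, (((k:ℝ)+1) * A (k+1)) * x ^ k) x := by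
  set r : ℝ := (|x| + 1) / 2 with hr
  have hx0 : 0 ≤ |x| := abs_nonneg x
  have hr0 : 0 < r := by rw [hr]; linarith
  have hr1 : r < 1 := by rw [hr]; linarith
  have hxr : |x| < r := by rw [hr]; linarith
  have hu : Summable (fun k : ℕ => |A k| * ((k:ℝ) * r ^ (k-1))) := by
    rw [← summable_nat_add_iff 1]
    apply (hA' r hr0.le hr1).congr
    intro k
    push_cast [Nat.add_sub_cancel]
    ring
  have key := hasDerivAt_tsum_of_isPreconnected hu (isOpen_Ioo (a := -r) (b := r))
    (isPreconnected_Ioo)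
    (g := fun k y => A k * y ^ k) (g' := fun k y => A k * ((k:ℝ) * y ^ (k-1)))
    (fun k y _ => (hasDerivAt_pow k y).const_mul (A k))
    (fun k y hy => ?_) (y₀ := 0) ⟨by linarith, hr0⟩ ?_ ⟨by rcases abs_lt.mp hxr with ⟨u,v⟩; linarith, (abs_lt.mp hxr).2⟩
  · -- identify the derivative sum
    have hsum : Summable (fun k : ℕ => (((k:ℝ)+1) * A (k+1)) * x ^ k) := by
      apply Summable.of_abs
      apply (hA' |x| hx0 hx).congr
      intro k
      rw [abs_mul, abs_mul, abs_pow]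
      congr 2
      · rw [abs_of_nonneg (by positivity)]
    have hs2 : HasSum (fun k : ℕ => A k * ((k:ℝ) * x ^ (k-1)))
        (∑' k : ℕ, (((k:ℝ)+1) * A (k+1)) * x ^ k) := by
      apply hasSum_shift (by simp)
      apply hsum.hasSum.congr_fun
      intro k
      push_cast [Nat.add_sub_cancel]
      ring
    exact hs2.tsum_eq ▸ key
  · -- bound
    have hyr : |y| ≤ r := by rcases hy with ⟨hy1, hy2⟩; rw [abs_le]; constructor <;> linarith
    calc ‖A k * ((k:ℝ) * y ^ (k-1))‖ = |A k| * ((k:ℝ) * |y| ^ (k-1)) := by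
          rw [Real.norm_eq_abs, abs_mul, abs_mul, abs_pow, Nat.abs_cast]
      _ ≤ |A k| * ((k:ℝ) * r ^ (k-1)) := by
          apply mul_le_mul_of_nonneg_left _ (abs_nonneg _)
          apply mul_le_mul_of_nonneg_left _ (Nat.cast_nonneg k)
          exact pow_le_pow_left₀ (abs_nonneg y) hyr _
  · -- summable at 0
    apply summable_of_ne_finset_zero (s := {0})
    intro k hk
    have : k ≠ 0 := by simpa using hk
    simp [zero_pow this]

noncomputable def Gf (a b c : ℝ) (x : ℝ) : ℝ :=
  ∑' k : ℕ, (((k:ℝ)+1) * hypCoeff a b c (k+1)) * x ^ k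

noncomputable def Hf (a b c : ℝ) (x : ℝ) : ℝ :=
  ∑' k : ℕ, (((k:ℝ)+1) * (((k:ℝ)+2) * hypCoeff a b c (k+2))) * x ^ k

section Der
variable (a b : ℝ) {c : ℝ} (hc : ∀ k : ℕ, c + (k:ℝ) ≠ 0)

include hc in
lemma sumC {x : ℝ} (hx : |x| < 1) : Summable (fun k : ℕ => hypCoeff a b c k * x ^ k) := by
  apply Summable.of_abs
  apply (summable_C a b hc (abs_nonneg x) hx).congr
  intro k
  rw [abs_mul, abs_pow]

include hc in
lemma sumD {x : ℝ} (hx : |x| < 1) :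
    Summable (fun k : ℕ => (((k:ℝ)+1) * hypCoeff a b c (k+1)) * x ^ k) := by
  apply Summable.of_abs
  apply (summable_D a b hc (abs_nonneg x) hx).congr
  intro k
  rw [abs_mul, abs_mul, abs_pow, abs_of_nonneg (show (0:ℝ) ≤ (k:ℝ)+1 by positivity), mul_assoc,
    ← mul_assoc]

include hc in
lemma sumE {x : ℝ} (hx : |x| < 1) :
    Summable (fun k : ℕ => (((k:ℝ)+1) * (((k:ℝ)+2) * hypCoeff a b c (k+2))) * x ^ k) := by
  apply Summable.of_abs
  apply (summable_E a b hc (abs_nonneg x) hx).congr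
  intro k
  rw [abs_mul, abs_mul, abs_mul, abs_pow,
    abs_of_nonneg (show (0:ℝ) ≤ (k:ℝ)+1 by positivity),
    abs_of_nonneg (show (0:ℝ) ≤ (k:ℝ)+2 by positivity)]

include hc in
lemma hasDerivAt_hypF {x : ℝ} (hx : |x| < 1) :
    HasDerivAt (hypF a b c) (Gf a b c x) x := by
  have h := deriv_powser (A := fun k => hypCoeff a b c k) ?_ hx
  · exact h
  · intro r h0 h1
    exact summable_D a b hc h0 h1

include hc in
lemma hasDerivAt_Gf {x : ℝ} (hx : |x| < 1) :
    HasDerivAt (Gf a b c) (Hf a b c x) x := by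
  have h := deriv_powser (A := fun k : ℕ => ((k:ℝ)+1) * hypCoeff a b c (k+1)) ?_ hx
  · convert h using 1
    · rfl
    apply tsum_congr
    intro k
    push_cast
    ring
  · intro r h0 h1
    apply (summable_E a b hc h0 h1).congr
    intro k
    push_cast
    rw [abs_mul, abs_of_nonneg (show (0:ℝ) ≤ (k:ℝ)+1+1 by positivity)]
    ring

include hc in
lemma hypODE {x : ℝ} (hx : |x| < 1) :
    x*(1-x)*(Hf a b c x) + (c-(a+b+1)*x)*(Gf a b c x) - a*b*(hypF a b c x) = 0 := by
  have HF : HasSum (fun k : ℕ => hypCoeff a b c k * x ^ k) (hypF a b c x) :=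
    (sumC a b hc hx).hasSum
  have HG : HasSum (fun k : ℕ => (((k:ℝ)+1) * hypCoeff a b c (k+1)) * x ^ k) (Gf a b c x) :=
    (sumD a b hc hx).hasSum
  have HH : HasSum (fun k : ℕ => (((k:ℝ)+1) * (((k:ℝ)+2) * hypCoeff a b c (k+2))) * x ^ k)
      (Hf a b c x) := (sumE a b hc hx).hasSum
  have HxG : HasSum (fun k : ℕ => (k:ℝ) * hypCoeff a b c k * x ^ k) (x * Gf a b c x) := by
    apply hasSum_shift (by simp)
    apply (HG.mul_left x).congr_fun
    intro k; push_cast; ring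
  have HxH : HasSum (fun k : ℕ => (k:ℝ) * (((k:ℝ)+1) * hypCoeff a b c (k+1)) * x ^ k)
      (x * Hf a b c x) := by
    apply hasSum_shift (by simp)
    apply (HH.mul_left x).congr_fun
    intro k; push_cast; ring
  have Hx2H : HasSum (fun k : ℕ => (k:ℝ) * ((k:ℝ)-1) * hypCoeff a b c k * x ^ k)
      (x * (x * Hf a b c x)) := by
    apply hasSum_shift (by simp)
    apply (HxH.mul_left x).congr_fun
    intro k; push_cast; ring
  have total := ((HxH.sub Hx2H).add ((HG.mul_left c).sub (HxG.mul_left (a+b+1)))).sub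
    (HF.mul_left (a*b))
  have hzero : (fun k : ℕ =>
      ((k:ℝ) * (((k:ℝ)+1) * hypCoeff a b c (k+1)) * x ^ k
        - (k:ℝ) * ((k:ℝ)-1) * hypCoeff a b c k * x ^ k)
      + (c * ((((k:ℝ)+1) * hypCoeff a b c (k+1)) * x ^ k)
        - (a+b+1) * ((k:ℝ) * hypCoeff a b c k * x ^ k))
      - a*b*(hypCoeff a b c k * x ^ k)) = fun _ => (0:ℝ) := by
    funext k
    have h := hyp_rec a b hc k
    linear_combination x ^ k * h
  rw [hzero] at total
  have hfin := total.unique hasSum_zero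
  linear_combination hfin

end Der

noncomputable def P1fun (a b c : ℝ) (m : ℕ) : ℝ → ℝ := fun y =>
  Gf a b c (y^2) * (2*y) * y ^ (-(m:ℤ))
    + hypF a b c (y^2) * ((((-(m:ℤ)) : ℤ) : ℝ) * y ^ (-(m:ℤ)-1))

noncomputable def P2fun (a b c : ℝ) (m : ℕ) (ρ : ℝ) : ℝ :=
  (Hf a b c (ρ^2) * (2*ρ) * (2*ρ) + Gf a b c (ρ^2) * 2) * ρ ^ (-(m:ℤ))
    + Gf a b c (ρ^2) * (2*ρ) * ((((-(m:ℤ)) : ℤ) : ℝ) * ρ ^ (-(m:ℤ)-1))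
  + (Gf a b c (ρ^2) * (2*ρ) * ((((-(m:ℤ)) : ℤ) : ℝ) * ρ ^ (-(m:ℤ)-1))
    + hypF a b c (ρ^2) * ((((-(m:ℤ)) : ℤ) : ℝ) * (((((-(m:ℤ))-1) : ℤ) : ℝ) * ρ ^ (-(m:ℤ)-1-1))))

section MainAux
variable (a b : ℝ) {c : ℝ} (hc : ∀ k : ℕ, c + (k:ℝ) ≠ 0) (m : ℕ)

lemma sq_mem {y : ℝ} (hy : y ∈ Set.Ioo (0:ℝ) 1) : |y^2| < 1 := by
  obtain ⟨u, v⟩ := hy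
  rw [abs_of_nonneg (by positivity)]
  nlinarith

include hc in
lemma aux_dF {y : ℝ} (hy : y ∈ Set.Ioo (0:ℝ) 1) :
    HasDerivAt (fun z : ℝ => hypF a b c (z^2)) (Gf a b c (y^2) * (2*y)) y := by
  have hp : HasDerivAt (fun z : ℝ => z^2) (2*y) y := by simpa using hasDerivAt_pow 2 y
  have hF := hasDerivAt_hypF a b hc (sq_mem hy)
  exact HasDerivAt.comp (h := fun z : ℝ => z^2) (x := y) hF hp

include hc in
lemma aux_dG {y : ℝ} (hy : y ∈ Set.Ioo (0:ℝ) 1) :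
    HasDerivAt (fun z : ℝ => Gf a b c (z^2)) (Hf a b c (y^2) * (2*y)) y := by
  have hp : HasDerivAt (fun z : ℝ => z^2) (2*y) y := by simpa using hasDerivAt_pow 2 y
  have hF := hasDerivAt_Gf a b hc (sq_mem hy)
  exact HasDerivAt.comp (h := fun z : ℝ => z^2) (x := y) hF hp

include hc in
lemma aux_deriv1 {y : ℝ} (hy : y ∈ Set.Ioo (0:ℝ) 1) :
    HasDerivAt (fun z : ℝ => hypF a b c (z^2) * z ^ (-(m:ℤ))) (P1fun a b c m y) y := by
  have hy0 : y ≠ 0 := ne_of_gt hy.1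
  have d1 := aux_dF a b hc hy
  have d2 : HasDerivAt (fun z : ℝ => z ^ (-(m:ℤ))) ((((-(m:ℤ)) : ℤ) : ℝ) * y ^ (-(m:ℤ)-1)) y :=
    hasDerivAt_zpow _ _ (Or.inl hy0)
  exact d1.mul d2

include hc in
lemma aux_deriv2 {ρ : ℝ} (hρ : ρ ∈ Set.Ioo (0:ℝ) 1) :
    HasDerivAt (P1fun a b c m) (P2fun a b c m ρ) ρ := by
  have hρ0 : ρ ≠ 0 := ne_of_gt hρ.1
  have q1 := aux_dG a b hc hρ
  have q2 : HasDerivAt (fun y : ℝ => 2*y) 2 ρ := by simpa using (hasDerivAt_id ρ).const_mul 2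
  have q3 : HasDerivAt (fun y : ℝ => y ^ (-(m:ℤ))) ((((-(m:ℤ)) : ℤ) : ℝ) * ρ ^ (-(m:ℤ)-1)) ρ :=
    hasDerivAt_zpow _ _ (Or.inl hρ0)
  have q4 : HasDerivAt (fun y : ℝ => (((-(m:ℤ)) : ℤ) : ℝ) * y ^ (-(m:ℤ)-1))
      ((((-(m:ℤ)) : ℤ) : ℝ) * (((((-(m:ℤ))-1) : ℤ) : ℝ) * ρ ^ (-(m:ℤ)-1-1))) ρ :=
    (hasDerivAt_zpow _ _ (Or.inl hρ0)).const_mul _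
  have d1 := aux_dF a b hc hρ
  exact ((q1.mul q2).mul q3).add (d1.mul q4)

end MainAux


/-- `ψ₂(λ,·)` solves the radial equation on `(0,1)`. -/
theorem psi2_solves_radialEq (n : ℕ) (hn : 1 ≤ n) (lam : ℝ) (hlam : 0 ≤ lam) :
    ∀ ρ ∈ Set.Ioo (0 : ℝ) 1, RadialEq n lam (psi2 n lam) ρ := by
  obtain ⟨μ, hμ⟩ : ∃ μ : ℝ, μ = Real.sqrt ((n:ℝ)^2 + lam) := ⟨_, rfl⟩
  obtain ⟨a, ha⟩ : ∃ a : ℝ, a = (1 - (n:ℝ) - μ)/2 := ⟨_, rfl⟩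
  obtain ⟨b, hb⟩ : ∃ b : ℝ, b = (1 - (n:ℝ) + μ)/2 := ⟨_, rfl⟩
  obtain ⟨c, hcv⟩ : ∃ c : ℝ, c = 3/2 - (n:ℝ) := ⟨_, rfl⟩
  obtain ⟨m, hm⟩ : ∃ m : ℕ, m = 2*n - 1 := ⟨_, rfl⟩
  have hc : ∀ k : ℕ, c + (k:ℝ) ≠ 0 := by
    intro k h
    rw [hcv] at h
    have h3 : (3 + 2*k : ℕ) = (2*n : ℕ) := by
      have : (3:ℝ) + 2*(k:ℝ) = 2*(n:ℝ) := by linarith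
      exact_mod_cast this
    omega
  have hμ2 : μ^2 = (n:ℝ)^2 + lam := by rw [hμ]; exact Real.sq_sqrt (by positivity)
  have hmr : ((m:ℕ):ℝ) = 2*(n:ℝ) - 1 := by
    rw [hm]
    have h2 : (1:ℕ) ≤ 2*n := by omega
    push_cast [Nat.cast_sub h2]
    ring
  have hpsi : psi2 n lam = fun y => hypF a b c (y^2) * y ^ (-(m:ℤ)) := by
    funext y
    unfold psi2
    rw [← hμ, ← ha, ← hb, ← hcv, ← hm]
    rw [div_eq_mul_inv, ← zpow_natCast y m, ← zpow_neg]
  intro ρ hρ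
  have hρ0 : ρ ≠ 0 := ne_of_gt hρ.1
  have hder1 : ∀ y ∈ Set.Ioo (0:ℝ) 1, HasDerivAt (psi2 n lam) (P1fun a b c m y) y := by
    intro y hy
    rw [hpsi]
    exact aux_deriv1 a b hc m hy
  have hev : deriv (psi2 n lam) =ᶠ[𝓝 ρ] P1fun a b c m :=
    Filter.eventuallyEq_of_mem (isOpen_Ioo.mem_nhds hρ) (fun y hy => (hder1 y hy).deriv)
  have hd2 : deriv (deriv (psi2 n lam)) ρ = P2fun a b c m ρ := by
    rw [hev.deriv_eq]
    exact (aux_deriv2 a b hc m hρ).deriv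
  unfold RadialEq
  rw [hd2, (hder1 ρ hρ).deriv]
  simp only [hpsi]
  have ode := hypODE a b hc (sq_mem hρ)
  have hab : a + b = 1 - (n:ℝ) := by rw [ha, hb]; ring
  have hab2 : a * b = ((1-(n:ℝ))^2 - ((n:ℝ)^2 + lam))/4 := by
    rw [ha, hb, ← hμ2]; ring
  rw [hab, hab2] at ode
  have e0 : ρ ^ (-(m:ℤ)) = ρ ^ (-(m:ℤ)-1-1) * ρ^2 := by
    rw [show ρ^2 = ρ^((2:ℕ):ℤ) from (zpow_natCast ρ 2).symm, ← zpow_add₀ hρ0]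
    congr 1
    push_cast
    ring
  have e1 : ρ ^ (-(m:ℤ)-1) = ρ ^ (-(m:ℤ)-1-1) * ρ := by
    rw [← zpow_add_one₀ hρ0]
    congr 1
    ring
  have hint1 : (((-(m:ℤ)) : ℤ) : ℝ) = -(2*(n:ℝ)-1) := by push_cast [hmr]; ring
  have hint2 : ((((-(m:ℤ))-1) : ℤ) : ℝ) = -(2*(n:ℝ)-1)-1 := by push_cast [hmr]; ring
  simp only [P1fun, P2fun]
  rw [e0, e1, hint1, hint2]
  field_simp
  linear_combination (4 * ρ^2) * ode - (4 * ρ^2) * Gf a b c (ρ^2) * hcv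
end

section
/- Let n ≥ 1 be an integer and λ ∈ ℝ with λ ≥ 0, and set μ := √(n² + λ). Then ∫₀¹ ψ₁(λ,ρ) · ρ^{2n}/√(1−ρ²) dρ = √π · Γ(n + 1/2) / (2 · Γ((2 + n − μ)/2) · Γ((2 + n + μ)/2)), where Γ denotes the Euler Gamma function (interpreted so that Γ vanishes at nonpositive integers, in which case both sides are understood accordingly). -/
open Set Filter
open scoped Topology Real

lemma poch_succ_left (d : ℝ) (k : ℕ) : poch d (k+1) = d * poch (d+1) k := by
  simp [poch, ascPochhammer_succ_left, Polynomial.eval_mul, Polynomial.eval_comp]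
lemma poch_prod (d : ℝ) (k : ℕ) : poch d k = ∏ j ∈ Finset.range k, (d + j) := by
  induction k with
  | zero => simp [poch_zero]
  | succ k ih => rw [poch_succ, ih, Finset.prod_range_succ]
lemma poch_pos_s6 {d : ℝ} (hd : 0 < d) (k : ℕ) : 0 < poch d k := by
  induction k with
  | zero => simp [poch_zero]
  | succ k ih => rw [poch_succ]; positivity
lemma Gamma_poch {x : ℝ} (hx : 0 < x) (k : ℕ) :
    Real.Gamma (x + k) = poch x k * Real.Gamma x := by
  induction k with
  | zero => simp [poch_zero]
  | succ k ih =>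
    have h1 : x + (k+1 : ℕ) = (x + k) + 1 := by push_cast; ring
    rw [h1, Real.Gamma_add_one (by positivity), ih, poch_succ]; ring

lemma hypCoeff_succ (a b c : ℝ) (k : ℕ) :
    hypCoeff a b c (k+1)
      = hypCoeff a b c k * ((a+k)*(b+k) / (((k:ℝ)+1)*(c+k))) := by
  unfold hypCoeff
  rw [poch_succ, poch_succ, poch_succ, Nat.factorial_succ, div_mul_div_comm]
  push_cast
  ring_nf

lemma hypCoeff_eq_zero_of_neg_nat {m k : ℕ} (hmk : m < k) (b c : ℝ) :
    hypCoeff (-(m:ℝ)) b c k = 0 := by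
  have : poch (-(m:ℝ)) k = 0 := by
    rw [poch_prod]
    exact Finset.prod_eq_zero (Finset.mem_range.mpr hmk) (by simp)
  simp [hypCoeff, this]

lemma summable_abs_hypCoeff (n : ℕ) (hn : 1 ≤ n) (a b : ℝ) (ha : a ≤ 0) (hb : 0 ≤ b)
    (hab : a + b = n) :
    Summable (fun k => |hypCoeff a b ((n:ℝ)+1) k|) := by
  set t : ℕ → ℝ := fun k => hypCoeff a b ((n:ℝ)+1) k with ht
  set K : ℕ := max 1 ⌈-a⌉₊ with hK
  have hK1 : 1 ≤ K := le_max_left _ _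
  have hKa : -a ≤ K := le_trans (Nat.le_ceil _) (by exact_mod_cast le_max_right 1 ⌈-a⌉₊)
  have hKpos : (0:ℝ) < (K:ℝ)*((K:ℝ)+n) := by
    have : (1:ℝ) ≤ (K:ℝ) := by exact_mod_cast hK1
    positivity
  have key : ∀ k, K ≤ k → |t k| ≤ (|t K| * ((K:ℝ)*((K:ℝ)+n))) / (k*(k+n)) := by
    intro k hk
    induction k, hk using Nat.le_induction with
    | base => rw [mul_div_assoc, div_self hKpos.ne', mul_one]
    | succ k hk ih =>
      have hk1 : (1:ℝ) ≤ (k:ℝ) := by exact_mod_cast le_trans hK1 hk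
      have hak : 0 ≤ a + k := by
        have : -a ≤ (k:ℝ) := le_trans hKa (by exact_mod_cast hk)
        linarith
      have hbk : 0 ≤ b + k := by positivity
      have hnum_le : (a+k)*(b+k) ≤ (k:ℝ)*((k:ℝ)+n) := by nlinarith [hab]
      have hden : (0:ℝ) < ((k:ℝ)+1)*(((n:ℝ)+1)+k) := by positivity
      have hxnn : (0:ℝ) ≤ (a+k)*(b+k) / (((k:ℝ)+1)*(((n:ℝ)+1)+k)) :=
        div_nonneg (mul_nonneg hak hbk) hden.le
      have habs : |t (k+1)| = |t k| * ((a+k)*(b+k) / (((k:ℝ)+1)*(((n:ℝ)+1)+k))) := by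
        show |hypCoeff a b ((n:ℝ)+1) (k+1)| = _
        rw [hypCoeff_succ, abs_mul, abs_of_nonneg hxnn]
      have hstep : (a+k)*(b+k) / (((k:ℝ)+1)*(((n:ℝ)+1)+k))
          ≤ (k:ℝ)*((k:ℝ)+n) / (((k:ℝ)+1)*(((k:ℝ)+1)+n)) := by
        have h2 : ((k:ℝ)+1)*(((n:ℝ)+1)+k) = ((k:ℝ)+1)*(((k:ℝ)+1)+n) := by ring
        rw [h2]
        exact div_le_div_of_nonneg_right hnum_le (by positivity) |>.trans le_rfl
      rw [habs]
      push_cast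
      calc |t k| * ((a+k)*(b+k) / (((k:ℝ)+1)*(((n:ℝ)+1)+k)))
          ≤ (|t K| * ((K:ℝ)*((K:ℝ)+n))) / ((k:ℝ)*((k:ℝ)+n))
              * ((k:ℝ)*((k:ℝ)+n) / (((k:ℝ)+1)*(((k:ℝ)+1)+n))) :=
            mul_le_mul ih hstep hxnn (by positivity)
        _ = (|t K| * ((K:ℝ)*((K:ℝ)+n))) / (((k:ℝ)+1)*(((k:ℝ)+1)+n)) := by
            rw [div_mul_div_comm, mul_comm ((k:ℝ)*((k:ℝ)+n)) _, mul_div_mul_right _ _ (by positivity)]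
  -- compare with C/(k+1)^2
  set C : ℝ := |t K| * ((K:ℝ)*((K:ℝ)+n)) with hC
  have hCnn : 0 ≤ C := by positivity
  have hsum2 : Summable (fun k : ℕ => C / ((k:ℝ)+1)^2) := by
    have h0 : Summable (fun k : ℕ => C * (1 / (k:ℝ)^2)) :=
      (Real.summable_one_div_nat_pow.mpr one_lt_two).mul_left C
    have h1 := (summable_nat_add_iff 1).mpr h0
    apply h1.congr
    intro k
    push_cast
    ring
  have hsumK : Summable (fun k : ℕ => |t (k + K)|) := by
    apply Summable.of_nonneg_of_le (fun k => abs_nonneg _) _ hsum2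
    intro k
    have hkK : K ≤ k + K := Nat.le_add_left _ _
    refine (key _ hkK).trans ?_
    apply div_le_div_of_nonneg_left hCnn (by positivity)
    have h1 : ((k:ℝ)+1) ≤ ((k+K:ℕ):ℝ) := by
      push_cast
      have : (1:ℝ) ≤ (K:ℝ) := by exact_mod_cast hK1
      linarith
    have h2 : ((k:ℝ)+1) ≤ ((k+K:ℕ):ℝ) + n := by
      push_cast
      have : (1:ℝ) ≤ (K:ℝ) := by exact_mod_cast hK1
      have : (0:ℝ) ≤ (n:ℝ) := by positivity
      push_cast at h1 ⊢
      linarith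
    calc ((k:ℝ)+1)^2 = ((k:ℝ)+1)*((k:ℝ)+1) := sq ((k:ℝ)+1)
      _ ≤ ((k+K:ℕ):ℝ) * (((k+K:ℕ):ℝ) + n) := by
          apply mul_le_mul h1 h2 (by positivity) (by positivity)
  exact (summable_nat_add_iff K).mp hsumK

lemma tendsto_ratio (p q : ℝ) :
    Tendsto (fun N : ℕ => ((N:ℝ)+p)/((N:ℝ)+q)) atTop (𝓝 1) := by
  have hq : Tendsto (fun N : ℕ => (N:ℝ)+q) atTop atTop :=
    tendsto_atTop_add_const_right _ q tendsto_natCast_atTop_atTop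
  have h0 : Tendsto (fun N : ℕ => (p-q)/((N:ℝ)+q)) atTop (𝓝 0) :=
    Tendsto.div_atTop tendsto_const_nhds hq
  have h1 : Tendsto (fun N : ℕ => 1 + (p-q)/((N:ℝ)+q)) atTop (𝓝 1) := by
    simpa using tendsto_const_nhds.add h0
  apply h1.congr'
  filter_upwards [hq.eventually_gt_atTop 0] with N hN
  field_simp
  ring

set_option maxHeartbeats 1000000 in
lemma tsum_hypCoeff (n : ℕ) (hn : 1 ≤ n) (a b : ℝ) (ha : a ≤ 0) (hb : 1 ≤ b)
    (hab : a + b = n) :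
    ∑' k, hypCoeff a b ((n:ℝ)+1) k
      = Real.Gamma ((n:ℝ)+1) / (Real.Gamma (a+1) * Real.Gamma (b+1)) := by
  have hbe : b = (n:ℝ) - a := by linarith
  subst hbe
  by_cases haz : a = 0
  · subst haz
    have h0 : ∑' k, hypCoeff 0 ((n:ℝ) - 0) ((n:ℝ)+1) k = 1 := by
      rw [tsum_eq_single 0]
      · exact hypCoeff_zero _ _ _
      · intro k hk
        obtain ⟨j, rfl⟩ := Nat.exists_eq_succ_of_ne_zero hk
        simp [hypCoeff, poch_succ_left]
    rw [h0]
    have hΓn : Real.Gamma ((n:ℝ)+1) ≠ 0 := (Real.Gamma_pos_of_pos (by positivity)).ne'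
    rw [show ((0:ℝ)+1) = 1 by ring, Real.Gamma_one]
    rw [show ((n:ℝ) - 0 + 1) = (n:ℝ)+1 by ring]
    rw [one_mul, div_self hΓn]
  · have ha' : a < 0 := lt_of_le_of_ne ha haz
    have hb0 : (0:ℝ) < (n:ℝ) - a := by linarith
    have habne : a * ((n:ℝ) - a) ≠ 0 := (mul_neg_of_neg_of_pos ha' hb0).ne
    set t : ℕ → ℝ := fun k => hypCoeff a ((n:ℝ) - a) ((n:ℝ)+1) k with htdef
    set v : ℕ → ℝ := fun k => (k:ℝ)*((k:ℝ)+n) * t k / (a*((n:ℝ)-a)) with hvdef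
    have htel : ∀ k : ℕ, v (k+1) - v k = t k := by
      intro k
      have hk1 : ((k:ℝ)+1) ≠ 0 := by positivity
      have hkn : ((n:ℝ)+1+(k:ℝ)) ≠ 0 := by positivity
      have e1 : t (k+1) = t k * ((a+k)*(((n:ℝ)-a)+k) / (((k:ℝ)+1)*(((n:ℝ)+1)+k))) :=
        hypCoeff_succ _ _ _ k
      simp only [hvdef]
      rw [e1]
      push_cast
      field_simp
      ring
    have hps : ∀ N : ℕ, ∑ k ∈ Finset.range N, t k = v N := by
      intro N
      have h1 : ∑ k ∈ Finset.range N, t k = ∑ k ∈ Finset.range N, (v (k+1) - v k) :=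
        Finset.sum_congr rfl (fun k _ => (htel k).symm)
      rw [h1, Finset.sum_range_sub]
      have hv0 : v 0 = 0 := by simp [hvdef]
      rw [hv0, sub_zero]
    by_cases hint : ∃ m : ℕ, a = -((m:ℝ)+1)
    · obtain ⟨m, rfl⟩ := hint
      have hzero : ∀ k : ℕ, m+1 < k → t k = 0 := by
        intro k hk
        have : -((m:ℝ)+1) = -(((m+1:ℕ)):ℝ) := by push_cast; ring
        rw [htdef]
        simp only [this]
        exact hypCoeff_eq_zero_of_neg_nat hk _ _
      have hsum0 : ∑' k, t k = v (m+2) := by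
        rw [tsum_eq_sum (s := Finset.range (m+2))
          (fun k hk => hzero k (by have := Finset.mem_range.not.mp hk; omega))]
        exact hps (m+2)
      have hv2 : v (m+2) = 0 := by
        have h0 : t (m+2) = 0 := hzero (m+2) (by omega)
        simp [hvdef, h0]
      rw [hsum0, hv2, show -((m:ℝ)+1)+1 = -(m:ℝ) by ring, Real.Gamma_neg_nat_eq_zero,
        zero_mul, div_zero]
    · push_neg at hint
      have hane : a ≠ 0 := haz
      have hΓa : Real.Gamma (a+1) ≠ 0 := by
        apply Real.Gamma_ne_zero
        intro m h
        exact hint m (by linarith)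
      have hpoch_a_ne : ∀ N : ℕ, poch (a+1) N ≠ 0 := by
        intro N
        rw [poch_prod]
        refine Finset.prod_ne_zero_iff.mpr (fun j _ => ?_)
        intro h0
        exact hint j (by linarith)
      have hv : ∀ N : ℕ, 1 ≤ N → v (N+1) =
          (((N:ℝ)+0)/((N:ℝ)+(a+1))) * (((N:ℝ)+((n:ℝ)+1))/((N:ℝ)+((n:ℝ)-a+1)))
            * (Real.GammaSeq ((n:ℝ)+1) N /
              (Real.GammaSeq (a+1) N * Real.GammaSeq ((n:ℝ)-a+1) N)) := by
        intro N hN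
        have hN0 : (0:ℝ) < N := by exact_mod_cast hN
        have hfac : ((N.factorial : ℝ)) ≠ 0 := by exact_mod_cast N.factorial_ne_zero
        have hpn : (0:ℝ) < poch ((n:ℝ)+1) (N+1) := poch_pos_s6 (by positivity) _
        have hpa := hpoch_a_ne N
        have hpb : (0:ℝ) < poch ((n:ℝ)-a+1) N := poch_pos_s6 (by linarith) _
        have hNa : (a+1+(N:ℝ)) ≠ 0 := by
          intro h0
          exact hint N (by linarith)
        have hNb : ((n:ℝ)-a+1+(N:ℝ)) ≠ 0 := by positivity
        have hY : ((N:ℝ))^((n:ℝ)-a+1) ≠ 0 := (Real.rpow_pos_of_pos hN0 _).ne'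
        have hR : ((N:ℝ))^((n:ℝ)+1) ≠ 0 := (Real.rpow_pos_of_pos hN0 _).ne'
        have hrp : (N:ℝ)^(a+1) * (N:ℝ)^((n:ℝ)-a+1) = (N:ℝ)^((n:ℝ)+1) * N := by
          rw [← Real.rpow_add hN0,
            show (a+1)+((n:ℝ)-a+1) = ((n:ℝ)+1)+1 by ring, Real.rpow_add hN0, Real.rpow_one]
        have e1 : Real.GammaSeq (a+1) N
            = (N:ℝ)^(a+1) * (N.factorial:ℝ) / (poch (a+1) N * (a+1+(N:ℝ))) := by
          rw [Real.GammaSeq, ← poch_prod, poch_succ]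
        have e2 : Real.GammaSeq ((n:ℝ)-a+1) N
            = (N:ℝ)^((n:ℝ)-a+1) * (N.factorial:ℝ)
              / (poch ((n:ℝ)-a+1) N * ((n:ℝ)-a+1+(N:ℝ))) := by
          rw [Real.GammaSeq, ← poch_prod, poch_succ]
        have e3 : Real.GammaSeq ((n:ℝ)+1) N
            = (N:ℝ)^((n:ℝ)+1) * (N.factorial:ℝ) / poch ((n:ℝ)+1) (N+1) := by
          rw [Real.GammaSeq, ← poch_prod]
        have eGaGb : Real.GammaSeq (a+1) N * Real.GammaSeq ((n:ℝ)-a+1) N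
            = (N:ℝ)^((n:ℝ)+1) * (N:ℝ) * (N.factorial:ℝ)^2
              / (poch (a+1) N * poch ((n:ℝ)-a+1) N * ((a+1+(N:ℝ)) * ((n:ℝ)-a+1+(N:ℝ)))) := by
          rw [e1, e2, div_mul_div_comm]
          congr 1
          · calc (N:ℝ)^(a+1) * (N.factorial:ℝ) * ((N:ℝ)^((n:ℝ)-a+1) * (N.factorial:ℝ))
                = ((N:ℝ)^(a+1) * (N:ℝ)^((n:ℝ)-a+1)) * (N.factorial:ℝ)^2 := by ring
              _ = (N:ℝ)^((n:ℝ)+1) * (N:ℝ) * (N.factorial:ℝ)^2 := by rw [hrp]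
          · ring
        simp only [hvdef, htdef, hypCoeff]
        rw [poch_succ_left a, poch_succ_left ((n:ℝ)-a), Nat.factorial_succ, eGaGb, e3]
        have hN1 : ((N:ℝ)+1) ≠ 0 := by positivity
        have hNa' : ((N:ℝ)+(a+1)) ≠ 0 := by intro h; exact hNa (by linarith)
        have hNb' : ((N:ℝ)+((n:ℝ)-a+1)) ≠ 0 := by intro h; exact hNb (by linarith)
        push_cast
        field_simp [hfac, hpn.ne', hpa, hpb.ne', hNa, hNb, hNa', hNb', hR, hane, hb0.ne',
          hN0.ne', hN1]
        ring
      have hΓb : Real.Gamma ((n:ℝ)-a+1) ≠ 0 := (Real.Gamma_pos_of_pos (by linarith)).ne'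
      have hquot : Tendsto (fun N => Real.GammaSeq ((n:ℝ)+1) N /
          (Real.GammaSeq (a+1) N * Real.GammaSeq ((n:ℝ)-a+1) N)) atTop
          (𝓝 (Real.Gamma ((n:ℝ)+1) / (Real.Gamma (a+1) * Real.Gamma ((n:ℝ)-a+1)))) :=
        (Real.GammaSeq_tendsto_Gamma ((n:ℝ)+1)).div
          ((Real.GammaSeq_tendsto_Gamma (a+1)).mul
            (Real.GammaSeq_tendsto_Gamma ((n:ℝ)-a+1))) (mul_ne_zero hΓa hΓb)
      have hrat := (tendsto_ratio 0 (a+1)).mul (tendsto_ratio ((n:ℝ)+1) ((n:ℝ)-a+1))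
      have hvlim : Tendsto (fun N : ℕ => v (N+1)) atTop
          (𝓝 (Real.Gamma ((n:ℝ)+1) / (Real.Gamma (a+1) * Real.Gamma ((n:ℝ)-a+1)))) := by
        have h2 := hrat.mul hquot
        rw [one_mul, one_mul] at h2
        apply h2.congr'
        filter_upwards [eventually_ge_atTop 1] with N hN
        exact (hv N hN).symm
      have hsummable : Summable t :=
        (summable_abs_hypCoeff n hn a ((n:ℝ)-a) ha (by linarith) (by ring)).of_abs
      have htend2 : Tendsto (fun N : ℕ => ∑ k ∈ Finset.range (N+1), t k) atTop
          (𝓝 (∑' k, t k)) :=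
        hsummable.hasSum.tendsto_sum_nat.comp (tendsto_add_atTop_nat 1)
      have htend3 : Tendsto (fun N : ℕ => v (N+1)) atTop (𝓝 (∑' k, t k)) :=
        htend2.congr (fun N => hps (N+1))
      exact tendsto_nhds_unique htend3 hvlim

lemma beta_lemma (m : ℕ) :
    MeasureTheory.IntegrableOn (fun t : ℝ => t^m / (Real.sqrt t * Real.sqrt (1-t)))
        (Ioo (0:ℝ) 1) ∧
      ∫ t in Ioo (0:ℝ) 1, t^m / (Real.sqrt t * Real.sqrt (1-t))
        = Real.Gamma ((m:ℝ)+1/2) * Real.sqrt π / Real.Gamma ((m:ℝ)+1) := by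
  set u : ℂ := ((((m:ℝ)+1/2) : ℝ) : ℂ) with hu
  set v : ℂ := (((1/2 : ℝ)) : ℂ) with hv
  have hure : 0 < u.re := by rw [hu, Complex.ofReal_re]; positivity
  have hvre : 0 < v.re := by rw [hv, Complex.ofReal_re]; norm_num
  set fc : ℝ → ℂ := fun x => (x:ℂ)^(u-1) * ((1:ℂ)-x)^(v-1) with hfc
  set g : ℝ → ℝ := fun x => x^m / (Real.sqrt x * Real.sqrt (1-x)) with hg
  have hconv : IntervalIntegrable fc MeasureTheory.volume 0 1 :=
    Complex.betaIntegral_convergent hure hvre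
  have hIoo : MeasureTheory.IntegrableOn fc (Ioo (0:ℝ) 1) :=
    ((intervalIntegrable_iff_integrableOn_Ioc_of_le zero_le_one).mp hconv).mono_set
      Ioo_subset_Ioc_self
  have hpt : ∀ x ∈ Ioo (0:ℝ) 1, fc x = ((g x : ℝ) : ℂ) := by
    intro x hx
    obtain ⟨hx0, hx1⟩ := hx
    have e1 : (x:ℂ)^(u-1) = ((x ^ ((m:ℝ)-1/2) : ℝ) : ℂ) := by
      rw [Complex.ofReal_cpow hx0.le]
      congr 1
      rw [hu]
      push_cast
      ring
    have e2 : ((1:ℂ)-(x:ℂ))^(v-1) = (((1-x) ^ (-(1/2):ℝ) : ℝ) : ℂ) := by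
      rw [show ((1:ℂ) - (x:ℂ)) = (((1-x : ℝ)):ℂ) by push_cast; ring,
        Complex.ofReal_cpow (by linarith)]
      congr 1
      rw [hv]
      push_cast
      ring
    rw [hfc]
    simp only []
    rw [e1, e2, ← Complex.ofReal_mul]
    congr 1
    rw [hg]
    simp only []
    rw [Real.rpow_sub hx0, Real.rpow_natCast, Real.rpow_neg (by linarith : (0:ℝ) ≤ 1-x),
      ← Real.sqrt_eq_rpow, ← Real.sqrt_eq_rpow, ← div_eq_mul_inv, div_div]
  have hgI : MeasureTheory.IntegrableOn g (Ioo (0:ℝ) 1) := by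
    have hC : MeasureTheory.IntegrableOn (fun x => ((g x : ℝ) : ℂ)) (Ioo (0:ℝ) 1) :=
      hIoo.congr_fun hpt measurableSet_Ioo
    have := (Complex.reCLM : ℂ →L[ℝ] ℝ).integrable_comp hC
    apply this.congr
    filter_upwards with x
    simp
  refine ⟨hgI, ?_⟩
  have hbeta := Complex.Gamma_mul_Gamma_eq_betaIntegral hure hvre
  have hbI : Complex.betaIntegral u v = ((∫ t in Ioo (0:ℝ) 1, g t : ℝ) : ℂ) := by
    rw [Complex.betaIntegral, intervalIntegral.integral_of_le zero_le_one,
      MeasureTheory.integral_Ioc_eq_integral_Ioo]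
    rw [MeasureTheory.setIntegral_congr_fun measurableSet_Ioo hpt]
    exact integral_ofReal
  rw [hbI, hu, hv] at hbeta
  rw [Complex.Gamma_ofReal, Complex.Gamma_ofReal] at hbeta
  have huv : ((((m:ℝ)+1/2):ℝ):ℂ) + (((1/2:ℝ)):ℂ) = ((((m:ℝ)+1):ℝ):ℂ) := by push_cast; ring
  rw [huv, Complex.Gamma_ofReal] at hbeta
  rw [← Complex.ofReal_mul, ← Complex.ofReal_mul, Complex.ofReal_inj] at hbeta
  have hΓ : (0:ℝ) < Real.Gamma ((m:ℝ)+1) := Real.Gamma_pos_of_pos (by positivity)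
  rw [Real.Gamma_one_half_eq] at hbeta
  rw [eq_div_iff hΓ.ne']
  linarith [hbeta]

lemma sqrt_image_Ioo : Real.sqrt '' Ioo (0:ℝ) 1 = Ioo (0:ℝ) 1 := by
  ext y
  constructor
  · rintro ⟨x, ⟨hx0, hx1⟩, rfl⟩
    refine ⟨Real.sqrt_pos.mpr hx0, ?_⟩
    rw [show (1:ℝ) = Real.sqrt 1 by simp]
    exact Real.sqrt_lt_sqrt hx0.le hx1
  · rintro ⟨hy0, hy1⟩
    exact ⟨y^2, ⟨by positivity, by nlinarith⟩, by rw [Real.sqrt_sq hy0.le]⟩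


/-- the weighted integral of `ψ₁(λ,·)` equals
`√π Γ(n+1/2) / (2 Γ((2+n−μ)/2) Γ((2+n+μ)/2))` with `μ = √(n²+λ)`. -/
theorem psi1_weighted_integral (n : ℕ) (hn : 1 ≤ n) (lam : ℝ) (hlam : 0 ≤ lam) :
    ∫ ρ in (0 : ℝ)..1, psi1 n lam ρ * ρ ^ (2 * n) / Real.sqrt (1 - ρ ^ 2)
      = Real.sqrt π * Real.Gamma ((n : ℝ) + 1 / 2) /
          (2 * Real.Gamma ((2 + (n : ℝ) - Real.sqrt ((n : ℝ) ^ 2 + lam)) / 2)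
            * Real.Gamma ((2 + (n : ℝ) + Real.sqrt ((n : ℝ) ^ 2 + lam)) / 2)) := by
  have hn1 : (1:ℝ) ≤ (n:ℝ) := by exact_mod_cast hn
  set μ : ℝ := Real.sqrt ((n:ℝ)^2 + lam) with hμdef
  have hμn : (n:ℝ) ≤ μ := by
    rw [hμdef, show (n:ℝ) = Real.sqrt ((n:ℝ)^2) by rw [Real.sqrt_sq (by positivity)]]
    exact Real.sqrt_le_sqrt (by nlinarith [Real.sq_sqrt (show (0:ℝ) ≤ (n:ℝ)^2 by positivity)])
  set a : ℝ := ((n:ℝ) - μ)/2 with hadef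
  set b : ℝ := ((n:ℝ) + μ)/2 with hbdef
  set c : ℝ := (n:ℝ) + 1/2 with hcdef
  have ha : a ≤ 0 := by rw [hadef]; linarith
  have hb1 : 1 ≤ b := by rw [hbdef]; linarith
  have hab : a + b = (n:ℝ) := by rw [hadef, hbdef]; ring
  have hcpos : 0 < c := by rw [hcdef]; positivity
  have hn1pos : (0:ℝ) < (n:ℝ)+1 := by positivity
  have hfacne : ((n.factorial : ℕ) : ℝ) ≠ 0 := by exact_mod_cast n.factorial_ne_zero
  -- the auxiliary family
  set F : ℕ → ℝ → ℝ := fun k t =>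
    hypCoeff a b c k * t^k * (t^n / (2*(Real.sqrt t * Real.sqrt (1-t)))) with hFdef
  have hFk_eq : ∀ k, ∀ t:ℝ, F k t
      = (hypCoeff a b c k / 2) * (t^(k+n)/(Real.sqrt t * Real.sqrt (1-t))) := by
    intro k t
    rw [hFdef]
    simp only []
    rw [pow_add]
    ring
  have hFint : ∀ k, MeasureTheory.IntegrableOn (F k) (Ioo (0:ℝ) 1) := by
    intro k
    apply MeasureTheory.Integrable.congr ((beta_lemma (k+n)).1.const_mul (hypCoeff a b c k / 2))
    filter_upwards with t
    exact (hFk_eq k t).symm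
  have hFval : ∀ k, ∫ t in Ioo (0:ℝ) 1, F k t
      = (hypCoeff a b c k/2)
        * (Real.Gamma (((k+n:ℕ):ℝ)+1/2) * Real.sqrt π / Real.Gamma (((k+n:ℕ):ℝ)+1)) := by
    intro k
    rw [MeasureTheory.setIntegral_congr_fun measurableSet_Ioo (fun t _ => hFk_eq k t),
      MeasureTheory.integral_const_mul, (beta_lemma (k+n)).2]
  have hbeta_nonneg : ∀ k : ℕ,
      0 ≤ Real.Gamma (((k+n:ℕ):ℝ)+1/2) * Real.sqrt π / Real.Gamma (((k+n:ℕ):ℝ)+1) := by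
    intro k
    apply div_nonneg (mul_nonneg (Real.Gamma_pos_of_pos (by positivity)).le (Real.sqrt_nonneg _))
      (Real.Gamma_pos_of_pos (by positivity)).le
  have hFnorm : ∀ k, ∫ t in Ioo (0:ℝ) 1, ‖F k t‖
      = (|hypCoeff a b c k|/2)
        * (Real.Gamma (((k+n:ℕ):ℝ)+1/2) * Real.sqrt π / Real.Gamma (((k+n:ℕ):ℝ)+1)) := by
    intro k
    rw [MeasureTheory.setIntegral_congr_fun (f := fun t => ‖F k t‖)
      (g := fun t => (|hypCoeff a b c k|/2) * (t^(k+n)/(Real.sqrt t * Real.sqrt (1-t))))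
      measurableSet_Ioo ?_, MeasureTheory.integral_const_mul, (beta_lemma (k+n)).2]
    intro t ht
    obtain ⟨ht0, ht1⟩ := ht
    have hXnn : (0:ℝ) ≤ t^(k+n)/(Real.sqrt t * Real.sqrt (1-t)) := by positivity
    simp only [Real.norm_eq_abs]
    rw [hFk_eq k t, abs_mul, abs_of_nonneg hXnn, abs_div]
    norm_num
  -- the coefficient identity
  have hcoefid : ∀ k : ℕ, hypCoeff a b c k
        * (Real.Gamma (((k+n:ℕ):ℝ)+1/2) * Real.sqrt π / Real.Gamma (((k+n:ℕ):ℝ)+1))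
      = (Real.sqrt π * Real.Gamma c / (n.factorial:ℝ)) * hypCoeff a b ((n:ℝ)+1) k := by
    intro k
    have h1 : ((k+n:ℕ):ℝ) + 1/2 = c + k := by rw [hcdef]; push_cast; ring
    have h2 : ((k+n:ℕ):ℝ) + 1 = ((n:ℝ)+1) + k := by push_cast; ring
    have h3 : Real.Gamma ((n:ℝ)+1) = (n.factorial : ℝ) := Real.Gamma_nat_eq_factorial n
    rw [h1, h2, Gamma_poch hcpos, Gamma_poch hn1pos, h3]
    unfold hypCoeff
    have hpc := poch_pos_s6 hcpos k
    have hpn := poch_pos_s6 hn1pos k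
    have hkf : ((k.factorial : ℕ):ℝ) ≠ 0 := by exact_mod_cast k.factorial_ne_zero
    field_simp
  -- summability of norms
  have hsummable := summable_abs_hypCoeff n hn a b ha (by linarith) hab
  have hsumnorm : Summable (fun k => ∫ t in Ioo (0:ℝ) 1, ‖F k t‖) := by
    apply Summable.congr ((hsummable.mul_left
      (Real.sqrt π * Real.Gamma c / (n.factorial:ℝ) / 2)))
    intro k
    rw [hFnorm k]
    have hconstnn : 0 ≤ Real.sqrt π * Real.Gamma c / (n.factorial:ℝ) :=
      div_nonneg (mul_nonneg (Real.sqrt_nonneg _) (Real.Gamma_pos_of_pos hcpos).le)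
        (by positivity)
    have h6 := congrArg (fun z : ℝ => |z|) (hcoefid k)
    rw [abs_mul, abs_mul, abs_of_nonneg (hbeta_nonneg k), abs_of_nonneg hconstnn] at h6
    linarith [h6]
  have hInterchange := MeasureTheory.integral_tsum_of_summable_integral_norm hFint hsumnorm
  rw [intervalIntegral.integral_of_le zero_le_one, MeasureTheory.integral_Ioc_eq_integral_Ioo]
  have hcv : ∫ ρ in Ioo (0:ℝ) 1, psi1 n lam ρ * ρ^(2*n) / Real.sqrt (1-ρ^2)
      = ∫ t in Ioo (0:ℝ) 1, |1/(2*Real.sqrt t)| •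
          (psi1 n lam (Real.sqrt t) * (Real.sqrt t)^(2*n) / Real.sqrt (1-(Real.sqrt t)^2)) := by
    conv_lhs => rw [← sqrt_image_Ioo]
    exact MeasureTheory.integral_image_eq_integral_abs_deriv_smul measurableSet_Ioo
      (fun x hx => (Real.hasDerivAt_sqrt hx.1.ne').hasDerivWithinAt)
      (fun x hx y hy hxy => by
        rw [← Real.sq_sqrt hx.1.le, ← Real.sq_sqrt hy.1.le, show Real.sqrt x = Real.sqrt y from hxy]) _
  rw [hcv]
  have hpointwise : ∀ t ∈ Ioo (0:ℝ) 1, |1/(2*Real.sqrt t)| •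
        (psi1 n lam (Real.sqrt t) * (Real.sqrt t)^(2*n) / Real.sqrt (1-(Real.sqrt t)^2))
      = ∑' k, F k t := by
    intro t ht
    obtain ⟨ht0, ht1⟩ := ht
    have hst : Real.sqrt t ^ 2 = t := Real.sq_sqrt ht0.le
    have hstpos : 0 < Real.sqrt t := Real.sqrt_pos.mpr ht0
    have h2n : (Real.sqrt t)^(2*n) = t^n := by rw [pow_mul, hst]
    have hpsi : psi1 n lam (Real.sqrt t) = hypF a b c t := by
      simp only [psi1]
      rw [hst, ← hμdef, ← hadef, ← hbdef, ← hcdef]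
    rw [hpsi, h2n, hst, smul_eq_mul,
      abs_of_nonneg (by positivity : (0:ℝ) ≤ 1/(2*Real.sqrt t))]
    have htsum : ∑' k, F k t
        = (∑' k, hypCoeff a b c k * t^k) * (t^n/(2*(Real.sqrt t * Real.sqrt (1-t)))) :=
      tsum_mul_right
    rw [htsum]
    simp only [hypF]
    ring
  rw [MeasureTheory.setIntegral_congr_fun measurableSet_Ioo hpointwise, ← hInterchange]
  have hterm : ∀ k, ∫ t in Ioo (0:ℝ) 1, F k t
      = (Real.sqrt π * Real.Gamma c / (n.factorial:ℝ)/2) * hypCoeff a b ((n:ℝ)+1) k := by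
    intro k
    rw [hFval k]
    have := hcoefid k
    linarith
  rw [tsum_congr hterm, tsum_mul_left, tsum_hypCoeff n hn a b ha hb1 hab]
  rw [Real.Gamma_nat_eq_factorial n]
  rw [show (2 + (n:ℝ) - μ)/2 = a+1 by rw [hadef]; ring]
  rw [show (2 + (n:ℝ) + μ)/2 = b+1 by rw [hbdef]; ring]
  rw [div_div, div_mul_div_comm,
    show (Real.sqrt π * Real.Gamma c) * (n.factorial:ℝ)
      = (n.factorial:ℝ) * (Real.sqrt π * Real.Gamma c) from mul_comm _ _,
    show ((n.factorial:ℝ)*2) * (Real.Gamma (a+1)*Real.Gamma (b+1))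
      = (n.factorial:ℝ) * (2*Real.Gamma (a+1)*Real.Gamma (b+1)) by ring,
    mul_div_mul_left _ _ hfacne]
end

section
/- Let n ≥ 1 be an integer and λ ∈ ℝ with λ > 0, and set μ := √(n² + λ). Then ∫₀¹ ψ₁(λ,ρ) · ρ^{2n}/√(1−ρ²) dρ = 0 if and only if there exists a positive integer m such that λ = 2m(2m + 2n). In particular, the eigenvalues of the radial closed eigenvalue problem arising from even (symmetric) solutions are exactly λ_{2m} = 2m(2m + 2n), m ≥ 1. -/
open Set Filter
open scoped Topology Real

namespace P1

open MeasureTheory intervalIntegral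

noncomputable def g (s : ℕ) (ρ : ℝ) : ℝ := ρ ^ (2 * s) / Real.sqrt (1 - ρ ^ 2)

lemma g_meas (s : ℕ) : Measurable (g s) :=
  (measurable_id.pow_const _).div
    (Real.continuous_sqrt.measurable.comp (measurable_const.sub (measurable_id.pow_const 2)))

lemma g_nonneg (s : ℕ) {ρ : ℝ} (h0 : 0 ≤ ρ) : 0 ≤ g s ρ :=
  div_nonneg (pow_nonneg h0 _) (Real.sqrt_nonneg _)

lemma g_intble (s : ℕ) : IntervalIntegrable (g s) volume 0 1 := by
  have h1 : IntervalIntegrable (fun x : ℝ => (1 - x) ^ (-(1/2) : ℝ)) volume 0 1 := by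
    have := ((intervalIntegral.intervalIntegrable_rpow' (a := 0) (b := 1)
      (r := -(1/2)) (by norm_num)).comp_sub_left 1).symm
    norm_num at this
    exact this
  apply h1.mono_fun ((g_meas s).aestronglyMeasurable)
  rw [uIoc_of_le (by norm_num : (0:ℝ) ≤ 1)]
  filter_upwards [ae_restrict_mem measurableSet_Ioc] with x hx
  rcases eq_or_lt_of_le hx.2 with h1x | h1x
  · subst h1x
    norm_num [g, Real.zero_rpow]
  · have hx2 : (0:ℝ) < 1 - x ^ 2 := by nlinarith [hx.1]
    have hxx : (0:ℝ) < 1 - x := by linarith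
    rw [Real.norm_eq_abs, abs_of_nonneg (g_nonneg s hx.1.le), Real.norm_eq_abs,
      abs_of_nonneg (Real.rpow_nonneg hxx.le _)]
    have hrw : (1 - x) ^ (-(1/2) : ℝ) = 1 / Real.sqrt (1 - x) := by
      rw [Real.rpow_neg hxx.le, Real.sqrt_eq_rpow]; norm_num
    rw [hrw, g]
    apply div_le_div₀ (by norm_num) (pow_le_one₀ hx.1.le hx.2) (Real.sqrt_pos.2 hxx)
    apply Real.sqrt_le_sqrt; nlinarith [hx.1]

noncomputable def J (s : ℕ) : ℝ := ∫ ρ in (0:ℝ)..1, g s ρ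

lemma J_pos (s : ℕ) : 0 < J s := by
  apply intervalIntegral_pos_of_pos_on (g_intble s) _ one_pos
  intro x hx
  have h2 : (0:ℝ) < 1 - x ^ 2 := by nlinarith [hx.1, hx.2]
  have h3 := Real.sqrt_pos.2 h2
  have h4 := hx.1
  unfold g; positivity

lemma J_rec (s : ℕ) : (2*(s:ℝ)+2) * J (s+1) = (2*(s:ℝ)+1) * J s := by
  set G : ℝ → ℝ := fun ρ => ρ ^ (2*s+1) * Real.sqrt (1 - ρ ^ 2) with hG
  set G' : ℝ → ℝ := fun ρ => (2*(s:ℝ)+1) * g s ρ - (2*(s:ℝ)+2) * g (s+1) ρ with hG'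
  have hcont : ContinuousOn G (Icc 0 1) := by
    apply Continuous.continuousOn
    exact (continuous_pow _).mul ((continuous_const.sub (continuous_pow 2)).sqrt)
  have hderiv : ∀ x ∈ Ioo (0:ℝ) 1, HasDerivWithinAt G (G' x) (Ioi x) x := by
    intro x hx
    have hx2 : (0:ℝ) < 1 - x ^ 2 := by nlinarith [hx.1, hx.2]
    have hsq : Real.sqrt (1 - x^2) ^ 2 = 1 - x^2 := Real.sq_sqrt hx2.le
    have hsp : 0 < Real.sqrt (1 - x^2) := Real.sqrt_pos.2 hx2
    have h1 : HasDerivAt (fun ρ:ℝ => 1 - ρ^2) (-(2*x)) x := by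
      simpa using ((hasDerivAt_pow 2 x).const_sub 1)
    have hs : HasDerivAt (fun ρ:ℝ => Real.sqrt (1 - ρ^2))
        (1 / (2 * Real.sqrt (1-x^2)) * (-(2*x))) x :=
      (Real.hasDerivAt_sqrt hx2.ne').comp x h1
    have hp : HasDerivAt (fun ρ:ℝ => ρ^(2*s+1)) ((2*(s:ℝ)+1) * x^(2*s)) x := by
      have := hasDerivAt_pow (2*s+1) x
      convert this using 2 <;> push_cast <;> rfl
    have hkey : G' x = (2*(s:ℝ)+1) * x ^ (2*s) * Real.sqrt (1-x^2)
        + x^(2*s+1) * (1/(2*Real.sqrt (1-x^2)) * (-(2*x))) := by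
      rw [hG']; simp only [g]
      apply mul_right_cancel₀ hsp.ne'
      field_simp
      linear_combination (-(2*(s:ℝ)+1) * x^(2*s)) * hsq
    rw [hkey]
    exact (hp.mul hs).hasDerivWithinAt
  have hint : IntervalIntegrable G' volume 0 1 :=
    ((g_intble s).const_mul _).sub ((g_intble (s+1)).const_mul _)
  have hftc := intervalIntegral.integral_eq_sub_of_hasDeriv_right_of_le
    (by norm_num : (0:ℝ) ≤ 1) hcont hderiv hint
  have hG1 : G 1 = 0 := by simp [hG]
  have hG0 : G 0 = 0 := by simp [hG]
  rw [hG1, hG0, sub_zero] at hftc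
  rw [intervalIntegral.integral_sub ((g_intble s).const_mul _) ((g_intble (s+1)).const_mul _),
    intervalIntegral.integral_const_mul, intervalIntegral.integral_const_mul] at hftc
  have : (2*(s:ℝ)+1) * J s - (2*(s:ℝ)+2) * J (s+1) = 0 := hftc
  linarith


lemma poch_zero (d : ℝ) : poch d 0 = 1 := by simp [poch]

lemma poch_succ (d : ℝ) (k : ℕ) : poch d (k+1) = poch d k * (d + k) := by
  simp [poch, ascPochhammer_succ_eval]

lemma poch_pos {d : ℝ} (hd : 0 < d) (k : ℕ) : 0 < poch d k := by
  induction k with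
  | zero => simp [poch_zero]
  | succ k ih => rw [poch_succ]; exact mul_pos ih (by positivity)

section Main

variable (n : ℕ) (lam : ℝ)

/-- `a = (n-μ)/2`. -/
noncomputable def aa : ℝ := ((n:ℝ) - Real.sqrt ((n:ℝ)^2 + lam)) / 2
/-- `b = (n+μ)/2`. -/
noncomputable def bb : ℝ := ((n:ℝ) + Real.sqrt ((n:ℝ)^2 + lam)) / 2

lemma aa_add_bb : aa n lam + bb n lam = n := by unfold aa bb; ring

lemma aa_mul_bb (hlam : 0 ≤ lam) : aa n lam * bb n lam = -lam / 4 := by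
  have h : Real.sqrt ((n:ℝ)^2 + lam) ^ 2 = (n:ℝ)^2 + lam :=
    Real.sq_sqrt (by positivity)
  unfold aa bb
  linear_combination (-1/4 : ℝ) * h

/-- `u k = (a)_k (b)_k / (k! (n+1)_k)`. -/
noncomputable def u (k : ℕ) : ℝ :=
  poch (aa n lam) k * poch (bb n lam) k / ((k.factorial : ℝ) * poch ((n:ℝ)+1) k)

/-- `Q N = ∏_{j=1}^N (1 - λ/(4 j (j+n)))`. -/
noncomputable def Q (N : ℕ) : ℝ :=
  ∏ j ∈ Finset.range N, (1 - lam / (4 * ((j:ℝ)+1) * (((j:ℝ)+1) + n)))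

lemma Q_zero : Q n lam 0 = 1 := by simp [Q]

lemma Q_succ (N : ℕ) :
    Q n lam (N+1) = Q n lam N * (1 - lam / (4 * ((N:ℝ)+1) * (((N:ℝ)+1) + n))) := by
  rw [Q, Finset.prod_range_succ]; rfl

lemma u_zero : u n lam 0 = 1 := by simp [u, poch_zero]

lemma u_succ (k : ℕ) :
    u n lam (k+1) = u n lam k *
      ((aa n lam + k) * (bb n lam + k)) / (((k:ℝ)+1) * ((n:ℝ)+1+k)) := by
  have hf : ((k+1).factorial : ℝ) = (k.factorial : ℝ) * ((k:ℝ)+1) := by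
    rw [Nat.factorial_succ]; push_cast; ring
  have hp : poch ((n:ℝ)+1) (k+1) = poch ((n:ℝ)+1) k * ((n:ℝ)+1+k) := poch_succ _ _
  have hfne : (k.factorial : ℝ) ≠ 0 := Nat.cast_ne_zero.2 k.factorial_ne_zero
  have hpne : poch ((n:ℝ)+1) k ≠ 0 := (poch_pos (by positivity) k).ne'
  have h1 : ((k:ℝ)+1) ≠ 0 := by positivity
  have h2 : ((n:ℝ)+1+k) ≠ 0 := by positivity
  rw [u, u, poch_succ, poch_succ, hf, hp]
  field_simp


/-- key: `u (k+1) = (-λ/4) Q k / ((k+1)(k+1+n))` -/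
lemma u_succ_Q (hlam : 0 ≤ lam) (k : ℕ) :
    u n lam (k+1) = -lam / 4 * Q n lam k / (((k:ℝ)+1) * (((k:ℝ)+1) + n)) := by
  induction k with
  | zero =>
    rw [u_succ, u_zero, Q_zero]
    push_cast
    rw [add_zero, add_zero, add_zero, aa_mul_bb n lam hlam]
    ring
  | succ k ih =>
    have hab : (aa n lam + (k+1:ℕ)) * (bb n lam + (k+1:ℕ))
        = (((k:ℝ)+1) * (((k:ℝ)+1) + n)) * (1 - lam / (4 * ((k:ℝ)+1) * (((k:ℝ)+1) + n))) := by
      have h1 := aa_add_bb n lam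
      have h2 := aa_mul_bb n lam hlam
      have hD : (0:ℝ) < ((k:ℝ)+1) * (((k:ℝ)+1) + n) := by positivity
      have hx : (1 - lam / (4 * ((k:ℝ)+1) * (((k:ℝ)+1) + n)))
          = ((((k:ℝ)+1) * (((k:ℝ)+1)+(n:ℝ))) - lam/4) / (((k:ℝ)+1) * (((k:ℝ)+1)+n)) := by
        field_simp
      push_cast
      rw [hx, mul_div_cancel₀ _ hD.ne']
      linear_combination h2 + ((k:ℝ)+1)*h1
    rw [u_succ, ih, hab, Q_succ]
    have h3 : ((k:ℝ)+1) ≠ 0 := by positivity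
    have h4 : (((k:ℝ)+1) + n) ≠ 0 := by positivity
    have h5 : ((k:ℝ)+1+1) ≠ 0 := by positivity
    have h6 : ((n:ℝ)+1+(k+1:ℕ)) ≠ 0 := by push_cast; positivity
    have h7 : (((k+1:ℕ):ℝ)+1) ≠ 0 := by push_cast; positivity
    have h8 : ((((k+1:ℕ):ℝ)+1) + n) ≠ 0 := by push_cast; positivity
    push_cast
    push_cast at h6 h7 h8
    field_simp
    ring

/-- partial sums of `u` are `Q`. -/
lemma sum_u_eq_Q (hlam : 0 ≤ lam) (N : ℕ) :
    ∑ k ∈ Finset.range (N+1), u n lam k = Q n lam N := by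
  induction N with
  | zero => simp [u_zero, Q_zero]
  | succ N ih =>
    rw [Finset.sum_range_succ, ih, u_succ_Q n lam hlam, Q_succ]
    have h3 : ((N:ℝ)+1) ≠ 0 := by positivity
    have h4 : (((N:ℝ)+1) + n) ≠ 0 := by positivity
    field_simp
    ring

end Main
end P1
namespace P1
open MeasureTheory intervalIntegral

lemma hypCoeff_succ (a b c : ℝ) (hc : 0 < c) (k : ℕ) :
    hypCoeff a b c (k+1) = hypCoeff a b c k * ((a+k)*(b+k)) / (((k:ℝ)+1) * (c+k)) := by
  have hf : ((k+1).factorial : ℝ) = (k.factorial : ℝ) * ((k:ℝ)+1) := by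
    rw [Nat.factorial_succ]; push_cast; ring
  have hfne : (k.factorial : ℝ) ≠ 0 := Nat.cast_ne_zero.2 k.factorial_ne_zero
  have hpne : poch c k ≠ 0 := (poch_pos hc k).ne'
  have h1 : ((k:ℝ)+1) ≠ 0 := by positivity
  have h2 : (c+k) ≠ 0 := by positivity
  rw [hypCoeff, hypCoeff, poch_succ, poch_succ, poch_succ, hf]
  field_simp

lemma J_succ (s : ℕ) : J (s+1) = (2*(s:ℝ)+1) / (2*(s:ℝ)+2) * J s := by
  have h := J_rec s
  have h2 : (2*(s:ℝ)+2) ≠ 0 := by positivity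
  field_simp
  linarith [h]

lemma coefJ (n : ℕ) (lam : ℝ) (hlam : 0 ≤ lam) (k : ℕ) :
    hypCoeff (aa n lam) (bb n lam) ((n:ℝ)+1/2) k * J (n+k) = J n * u n lam k := by
  induction k with
  | zero => simp [hypCoeff, poch_zero, u_zero]
  | succ k ih =>
    have hc : (0:ℝ) < (n:ℝ)+1/2 := by positivity
    have hck : ((n:ℝ)+1/2+k) ≠ 0 := by positivity
    have hk1 : ((k:ℝ)+1) ≠ 0 := by positivity
    have hnk1 : ((n:ℝ)+1+k) ≠ 0 := by positivity
    have hd : (2*((n:ℝ)+k)+2) ≠ 0 := by positivity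
    have hJs : J (n+(k+1)) = (2*((n:ℝ)+k)+1) / (2*((n:ℝ)+k)+2) * J (n+k) := by
      have := J_succ (n+k)
      rw [show n+(k+1) = (n+k)+1 by ring]
      push_cast at this ⊢
      convert this using 3 <;> push_cast <;> ring
    calc hypCoeff (aa n lam) (bb n lam) ((n:ℝ)+1/2) (k+1) * J (n+(k+1))
        = (hypCoeff (aa n lam) (bb n lam) ((n:ℝ)+1/2) k * J (n+k)) *
            (((aa n lam + k)*(bb n lam + k)) / (((k:ℝ)+1)*((n:ℝ)+1/2+k))
              * ((2*((n:ℝ)+k)+1)/(2*((n:ℝ)+k)+2))) := by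
          rw [hypCoeff_succ _ _ _ hc, hJs]; ring
      _ = (J n * u n lam k) * (((aa n lam + k)*(bb n lam + k)) / (((k:ℝ)+1)*((n:ℝ)+1/2+k))
              * ((2*((n:ℝ)+k)+1)/(2*((n:ℝ)+k)+2))) := by rw [ih]
      _ = J n * u n lam (k+1) := by
          rw [u_succ]
          field_simp
          ring

end P1
namespace P1
open MeasureTheory intervalIntegral

lemma Q_abs_le_succ (n : ℕ) (lam : ℝ) (hlam : 0 ≤ lam) (N : ℕ) (h : lam ≤ (N:ℝ)+1) :
    |Q n lam (N+1)| ≤ |Q n lam N| := by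
  rw [Q_succ, abs_mul]
  have h1 : (0:ℝ) < 4*((N:ℝ)+1)*(((N:ℝ)+1)+n) := by positivity
  have hle : lam / (4*((N:ℝ)+1)*(((N:ℝ)+1)+n)) ≤ 1 := by
    rw [div_le_one h1]
    nlinarith [Nat.cast_nonneg (α := ℝ) n, Nat.cast_nonneg (α := ℝ) N]
  have hge : 0 ≤ lam / (4*((N:ℝ)+1)*(((N:ℝ)+1)+n)) := by positivity
  have habs : |1 - lam / (4*((N:ℝ)+1)*(((N:ℝ)+1)+n))| ≤ 1 :=
    abs_le.2 ⟨by linarith, by linarith⟩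
  calc |Q n lam N| * |1 - lam / (4*((N:ℝ)+1)*(((N:ℝ)+1)+n))|
      ≤ |Q n lam N| * 1 := mul_le_mul_of_nonneg_left habs (abs_nonneg _)
    _ = |Q n lam N| := mul_one _

lemma Q_bound (n : ℕ) (lam : ℝ) (hlam : 0 ≤ lam) : ∃ B : ℝ, ∀ N, |Q n lam N| ≤ B := by
  set j0 := ⌈lam⌉₊ with hj0
  have hmono : ∀ N, j0 ≤ N → |Q n lam N| ≤ |Q n lam j0| := by
    intro N hN
    induction N, hN using Nat.le_induction with
    | base => exact le_rfl
    | succ N hN ih =>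
      refine le_trans (Q_abs_le_succ n lam hlam N ?_) ih
      calc lam ≤ (j0:ℝ) := Nat.le_ceil lam
        _ ≤ (N:ℝ) := Nat.cast_le.2 hN
        _ ≤ (N:ℝ)+1 := by linarith
  refine ⟨∑ k ∈ Finset.range (j0+1), |Q n lam k|, fun N => ?_⟩
  by_cases hN : N ≤ j0
  · exact Finset.single_le_sum (f := fun k => |Q n lam k|) (fun i _ => abs_nonneg _)
      (Finset.mem_range.2 (Nat.lt_succ_of_le hN))
  · exact le_trans (hmono N (le_of_not_ge hN))
      (Finset.single_le_sum (f := fun k => |Q n lam k|) (fun i _ => abs_nonneg _)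
        (Finset.mem_range.2 (Nat.lt_succ_of_le le_rfl)))

lemma summable_abs_u (n : ℕ) (lam : ℝ) (hlam : 0 ≤ lam) :
    Summable (fun k => |u n lam k|) := by
  obtain ⟨B, hB⟩ := Q_bound n lam hlam
  have hB0 : 0 ≤ B := le_trans (abs_nonneg _) (hB 0)
  have hbase : Summable (fun k : ℕ => lam/4 * B * (1/((k:ℝ)+1)^2)) := by
    apply Summable.mul_left
    have h1 : Summable (fun k : ℕ => 1/((k:ℝ))^2) :=
      Real.summable_one_div_nat_pow.2 (by norm_num)
    have h2 := (summable_nat_add_iff (f := fun k : ℕ => 1/((k:ℝ))^2) 1).2 h1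
    apply h2.congr
    intro k
    push_cast
    ring
  have hshift : Summable (fun k : ℕ => |u n lam (k+1)|) := by
    apply Summable.of_nonneg_of_le (fun k => abs_nonneg _) _ hbase
    intro k
    rw [u_succ_Q n lam hlam k]
    have hd : (0:ℝ) < ((k:ℝ)+1) * (((k:ℝ)+1)+n) := by positivity
    have hB0' : 0 ≤ |Q n lam k| := abs_nonneg _
    calc |(-lam/4 * Q n lam k / (((k:ℝ)+1) * (((k:ℝ)+1)+n)))|
        = lam/4 * |Q n lam k| / (((k:ℝ)+1) * (((k:ℝ)+1)+n)) := by
          rw [abs_div, abs_of_pos hd, abs_mul, abs_div, abs_neg, abs_of_nonneg hlam]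
          norm_num
      _ ≤ lam/4 * B / (((k:ℝ)+1) * (((k:ℝ)+1)+n)) := by
          gcongr
          exact hB k
      _ ≤ lam/4 * B * (1/((k:ℝ)+1)^2) := by
          rw [mul_one_div]
          apply div_le_div_of_nonneg_left ?_ (by positivity) ?_
          · positivity
          · nlinarith [Nat.cast_nonneg (α := ℝ) n, Nat.cast_nonneg (α := ℝ) k]
  exact (summable_nat_add_iff 1).1 hshift

end P1
namespace P1
open MeasureTheory intervalIntegral

lemma Q_tendsto (n : ℕ) (lam : ℝ) (hlam : 0 ≤ lam) :
    Tendsto (Q n lam) atTop (𝓝 (∑' k, u n lam k)) := by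
  have hs : Summable (u n lam) := (summable_abs_u n lam hlam).of_abs
  have h1 := hs.hasSum.tendsto_sum_nat
  have h2 := h1.comp (tendsto_add_atTop_nat 1)
  exact Tendsto.congr (fun N => sum_u_eq_Q n lam hlam N) h2

lemma L_eq_zero_of_eigen (n : ℕ) (lam : ℝ) (hlam : 0 ≤ lam) (m : ℕ) (hm : 1 ≤ m)
    (heig : lam = 4*(m:ℝ)*((m:ℝ)+n)) : (∑' k, u n lam k) = 0 := by
  have hzero : ∀ N, m ≤ N → Q n lam N = 0 := by
    intro N hN
    apply Finset.prod_eq_zero (i := m-1) (Finset.mem_range.2 (by omega))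
    have hc : ((m-1:ℕ):ℝ) + 1 = (m:ℝ) := by
      have : ((m-1:ℕ):ℝ) = (m:ℝ) - 1 := by
        rw [Nat.cast_sub hm]; norm_num
      rw [this]; ring
    rw [hc, heig]
    have hm0 : (0:ℝ) < (m:ℝ) := by exact_mod_cast hm
    have hd : (0:ℝ) < 4*(m:ℝ)*((m:ℝ)+n) := by positivity
    field_simp
    ring
  have h2 : Tendsto (Q n lam) atTop (𝓝 0) := by
    apply Tendsto.congr' _ (tendsto_const_nhds (x := (0:ℝ)))
    filter_upwards [eventually_ge_atTop m] with N hN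
    exact (hzero N hN).symm
  exact tendsto_nhds_unique (Q_tendsto n lam hlam) h2

lemma prod_one_sub_ge (c : ℕ → ℝ) (F : Finset ℕ) (h0 : ∀ j ∈ F, 0 ≤ c j)
    (h1 : ∀ j ∈ F, c j ≤ 1) :
    1 - ∑ j ∈ F, c j ≤ ∏ j ∈ F, (1 - c j) := by
  classical
  induction F using Finset.induction_on with
  | empty => simp
  | insert _ _ hiF _ =>
    rename_i i F ih
    rw [Finset.prod_insert hiF, Finset.sum_insert hiF]
    have hci0 := h0 i (Finset.mem_insert_self i F)
    have hci1 := h1 i (Finset.mem_insert_self i F)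
    have hsum0 : 0 ≤ ∑ j ∈ F, c j :=
      Finset.sum_nonneg (fun j hj => h0 j (Finset.mem_insert_of_mem hj))
    have ihh := ih (fun j hj => h0 j (Finset.mem_insert_of_mem hj))
      (fun j hj => h1 j (Finset.mem_insert_of_mem hj))
    nlinarith [mul_le_mul_of_nonneg_left ihh (by linarith : (0:ℝ) ≤ 1 - c i)]

lemma tail_sum_le (n : ℕ) (lam : ℝ) (hn : 1 ≤ n) (hlam : 0 ≤ lam) (K N : ℕ)
    (hK : lam ≤ (K:ℝ)+1) :
    ∑ j ∈ Finset.Ico K N, lam / (4*((j:ℝ)+1)*(((j:ℝ)+1)+n)) ≤ 1/4 := by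
  have step : ∀ j ∈ Finset.Ico K N, lam / (4*((j:ℝ)+1)*(((j:ℝ)+1)+n))
      ≤ lam/4 * (1/((j:ℝ)+1) - 1/((j:ℝ)+2)) := by
    intro j _
    have hj1 : (0:ℝ) < (j:ℝ)+1 := by positivity
    have hj2 : (0:ℝ) < (j:ℝ)+2 := by positivity
    have hsub : 1/((j:ℝ)+1) - 1/((j:ℝ)+2) = 1/(((j:ℝ)+1)*((j:ℝ)+2)) := by
      field_simp; ring
    rw [hsub, mul_one_div, div_div]
    have hn' : (1:ℝ) ≤ (n:ℝ) := by exact_mod_cast hn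
    apply div_le_div_of_nonneg_left hlam (by positivity)
    nlinarith
  have htel : ∑ j ∈ Finset.Ico K N, (1/((j:ℝ)+1) - 1/((j:ℝ)+2)) ≤ 1/((K:ℝ)+1) := by
    rw [Finset.sum_Ico_eq_sum_range]
    have hrw : ∀ i : ℕ, 1/(((K+i:ℕ):ℝ)+1) - 1/(((K+i:ℕ):ℝ)+2)
        = (fun i : ℕ => 1/((K:ℝ)+(i:ℝ)+1)) i - (fun i : ℕ => 1/((K:ℝ)+(i:ℝ)+1)) (i+1) := by
      intro i; push_cast; ring
    calc ∑ i ∈ Finset.range (N-K), (1/(((K+i:ℕ):ℝ)+1) - 1/(((K+i:ℕ):ℝ)+2))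
        = ∑ i ∈ Finset.range (N-K), ((fun i : ℕ => 1/((K:ℝ)+(i:ℝ)+1)) i
            - (fun i : ℕ => 1/((K:ℝ)+(i:ℝ)+1)) (i+1)) :=
          Finset.sum_congr rfl (fun i _ => hrw i)
      _ = 1/((K:ℝ)+(0:ℕ)+1) - 1/((K:ℝ)+((N-K:ℕ):ℝ)+1) := Finset.sum_range_sub' _ _
      _ ≤ 1/((K:ℝ)+1) := by
          have h1 : (0:ℝ) ≤ 1/((K:ℝ)+((N-K:ℕ):ℝ)+1) := by positivity
          simp only [Nat.cast_zero, add_zero]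
          linarith
  have hKp : (0:ℝ) < (K:ℝ)+1 := by positivity
  calc ∑ j ∈ Finset.Ico K N, lam / (4*((j:ℝ)+1)*(((j:ℝ)+1)+n))
      ≤ ∑ j ∈ Finset.Ico K N, lam/4 * (1/((j:ℝ)+1) - 1/((j:ℝ)+2)) := Finset.sum_le_sum step
    _ = lam/4 * ∑ j ∈ Finset.Ico K N, (1/((j:ℝ)+1) - 1/((j:ℝ)+2)) := (Finset.mul_sum _ _ _).symm
    _ ≤ lam/4 * (1/((K:ℝ)+1)) := mul_le_mul_of_nonneg_left htel (by positivity)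
    _ ≤ 1/4 := by
        rw [mul_one_div, div_le_div_iff₀ hKp (by norm_num : (0:ℝ) < 4)]
        nlinarith

end P1
namespace P1
open MeasureTheory intervalIntegral

lemma L_ne_zero (n : ℕ) (lam : ℝ) (hn : 1 ≤ n) (hlam : 0 < lam)
    (H : ∀ m : ℕ, 1 ≤ m → lam ≠ 4*(m:ℝ)*((m:ℝ)+n)) : (∑' k, u n lam k) ≠ 0 := by
  set c : ℕ → ℝ := fun j => lam / (4*((j:ℝ)+1)*(((j:ℝ)+1)+n)) with hc
  have hfne : ∀ j : ℕ, (1 - c j) ≠ 0 := by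
    intro j h
    apply H (j+1) (by omega)
    have hd : (0:ℝ) < 4*((j:ℝ)+1)*(((j:ℝ)+1)+n) := by positivity
    have h2 : c j = 1 := by linarith
    rw [hc] at h2
    simp only at h2
    rw [div_eq_one_iff_eq hd.ne'] at h2
    push_cast
    rw [h2]
  set K := ⌈lam⌉₊ with hK
  have hlamK : lam ≤ (K:ℝ)+1 := le_trans (Nat.le_ceil lam) (by linarith)
  have hQK : Q n lam K ≠ 0 := Finset.prod_ne_zero_iff.2 (fun j _ => hfne j)
  have hcle : ∀ j : ℕ, K ≤ j → c j ≤ 1 := by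
    intro j hj
    rw [hc]
    simp only
    rw [div_le_one (by positivity)]
    have h1 : (K:ℝ) ≤ (j:ℝ) := Nat.cast_le.2 hj
    nlinarith [Nat.cast_nonneg (α := ℝ) n, Nat.cast_nonneg (α := ℝ) j]
  have hlow : ∀ N, K ≤ N → |Q n lam K| / 2 ≤ |Q n lam N| := by
    intro N hN
    have hsplit : Q n lam K * ∏ j ∈ Finset.Ico K N, (1 - c j) = Q n lam N :=
      Finset.prod_range_mul_prod_Ico _ hN
    have hprod_ge : 1 - ∑ j ∈ Finset.Ico K N, c j ≤ ∏ j ∈ Finset.Ico K N, (1 - c j) :=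
      prod_one_sub_ge c _ (fun j _ => by rw [hc]; positivity)
        (fun j hj => hcle j (Finset.mem_Ico.1 hj).1)
    have hsum_le : ∑ j ∈ Finset.Ico K N, c j ≤ 1/4 :=
      tail_sum_le n lam hn hlam.le K N hlamK
    have hpg : (1:ℝ)/2 ≤ ∏ j ∈ Finset.Ico K N, (1 - c j) := by linarith
    have hpnn : (0:ℝ) ≤ ∏ j ∈ Finset.Ico K N, (1 - c j) := by linarith
    calc |Q n lam K| / 2 = |Q n lam K| * (1/2) := by ring
      _ ≤ |Q n lam K| * ∏ j ∈ Finset.Ico K N, (1 - c j) :=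
          mul_le_mul_of_nonneg_left hpg (abs_nonneg _)
      _ = |Q n lam K| * |∏ j ∈ Finset.Ico K N, (1 - c j)| := by rw [abs_of_nonneg hpnn]
      _ = |Q n lam K * ∏ j ∈ Finset.Ico K N, (1 - c j)| := (abs_mul _ _).symm
      _ = |Q n lam N| := by rw [hsplit]
  have habs : Tendsto (fun N => |Q n lam N|) atTop (𝓝 |∑' k, u n lam k|) :=
    (Q_tendsto n lam hlam.le).abs
  have hge : |Q n lam K| / 2 ≤ |∑' k, u n lam k| :=
    ge_of_tendsto habs (eventually_atTop.2 ⟨K, hlow⟩)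
  intro h0
  rw [h0, abs_zero] at hge
  have : 0 < |Q n lam K| / 2 := by positivity
  linarith

end P1
namespace P1
open MeasureTheory intervalIntegral

lemma ptwise (n : ℕ) (lam : ℝ) (ρ : ℝ) :
    psi1 n lam ρ * ρ ^ (2*n) / Real.sqrt (1 - ρ^2)
      = ∑' k, hypCoeff (aa n lam) (bb n lam) ((n:ℝ)+1/2) k * g (n+k) ρ := by
  rw [psi1, hypF]
  rw [show ((n : ℝ) - Real.sqrt ((n : ℝ) ^ 2 + lam)) / 2 = aa n lam from rfl,
      show ((n : ℝ) + Real.sqrt ((n : ℝ) ^ 2 + lam)) / 2 = bb n lam from rfl,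
      show (n : ℝ) + 1/2 = (n:ℝ) + 1/2 from rfl]
  rw [← tsum_mul_right, ← tsum_div_const]
  apply tsum_congr
  intro k
  rw [g]
  have hpow : (ρ^2)^k * ρ^(2*n) = ρ^(2*(n+k)) := by
    rw [← pow_mul, ← pow_add]; congr 1; ring
  calc hypCoeff (aa n lam) (bb n lam) ((n:ℝ)+1/2) k * (ρ^2)^k * ρ^(2*n) / Real.sqrt (1-ρ^2)
      = hypCoeff (aa n lam) (bb n lam) ((n:ℝ)+1/2) k * ((ρ^2)^k * ρ^(2*n)) / Real.sqrt (1-ρ^2) := by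
        ring
    _ = hypCoeff (aa n lam) (bb n lam) ((n:ℝ)+1/2) k * (ρ^(2*(n+k)) / Real.sqrt (1-ρ^2)) := by
        rw [hpow, mul_div_assoc]

lemma integral_eq (n : ℕ) (lam : ℝ) (hlam : 0 < lam) :
    (∫ ρ in (0:ℝ)..1, psi1 n lam ρ * ρ ^ (2*n) / Real.sqrt (1 - ρ^2))
      = J n * ∑' k, u n lam k := by
  have hInt : ∀ k : ℕ, Integrable
      (fun ρ => hypCoeff (aa n lam) (bb n lam) ((n:ℝ)+1/2) k * g (n+k) ρ)
      (volume.restrict (Ioc (0:ℝ) 1)) := fun k => ((g_intble (n+k)).1).const_mul _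
  have hNorm : ∀ k : ℕ,
      (∫ ρ in Ioc (0:ℝ) 1, ‖hypCoeff (aa n lam) (bb n lam) ((n:ℝ)+1/2) k * g (n+k) ρ‖)
        = J n * |u n lam k| := by
    intro k
    have h1 : EqOn (fun ρ => ‖hypCoeff (aa n lam) (bb n lam) ((n:ℝ)+1/2) k * g (n+k) ρ‖)
        (fun ρ => |hypCoeff (aa n lam) (bb n lam) ((n:ℝ)+1/2) k| * g (n+k) ρ) (Ioc (0:ℝ) 1) := by
      intro ρ hρ
      simp only
      rw [norm_mul, Real.norm_eq_abs, Real.norm_eq_abs, abs_of_nonneg (g_nonneg _ hρ.1.le)]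
    rw [setIntegral_congr_fun measurableSet_Ioc h1, MeasureTheory.integral_const_mul,
      ← intervalIntegral.integral_of_le (by norm_num : (0:ℝ) ≤ 1)]
    have hco := coefJ n lam hlam.le k
    have hJpos := J_pos (n+k)
    calc |hypCoeff (aa n lam) (bb n lam) ((n:ℝ)+1/2) k| * J (n+k)
        = |hypCoeff (aa n lam) (bb n lam) ((n:ℝ)+1/2) k * J (n+k)| := by
          rw [abs_mul, abs_of_pos hJpos]
      _ = |J n * u n lam k| := by rw [hco]
      _ = J n * |u n lam k| := by rw [abs_mul, abs_of_pos (J_pos n)]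
  have hSum : Summable (fun k : ℕ =>
      ∫ ρ in Ioc (0:ℝ) 1, ‖hypCoeff (aa n lam) (bb n lam) ((n:ℝ)+1/2) k * g (n+k) ρ‖) := by
    apply Summable.congr ((summable_abs_u n lam hlam.le).mul_left (J n))
    intro k; exact (hNorm k).symm
  rw [intervalIntegral.integral_of_le (by norm_num : (0:ℝ) ≤ 1)]
  calc ∫ ρ in Ioc (0:ℝ) 1, psi1 n lam ρ * ρ^(2*n) / Real.sqrt (1-ρ^2)
      = ∫ ρ in Ioc (0:ℝ) 1, ∑' k, hypCoeff (aa n lam) (bb n lam) ((n:ℝ)+1/2) k * g (n+k) ρ :=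
        integral_congr_ae (Eventually.of_forall (fun ρ => ptwise n lam ρ))
    _ = ∑' k, ∫ ρ in Ioc (0:ℝ) 1, hypCoeff (aa n lam) (bb n lam) ((n:ℝ)+1/2) k * g (n+k) ρ :=
        (integral_tsum_of_summable_integral_norm hInt hSum).symm
    _ = ∑' k, J n * u n lam k := by
        apply tsum_congr; intro k
        rw [MeasureTheory.integral_const_mul, ← intervalIntegral.integral_of_le (by norm_num : (0:ℝ) ≤ 1)]
        exact coefJ n lam hlam.le k
    _ = J n * ∑' k, u n lam k := tsum_mul_left

end P1

/-- the weighted integral of `ψ₁(λ,·)` vanishes iff `λ = 2m(2m+2n)`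
for some positive integer `m`. -/
theorem psi1_weighted_integral_eq_zero_iff (n : ℕ) (hn : 1 ≤ n) (lam : ℝ)
    (hlam : 0 < lam) :
    (∫ ρ in (0 : ℝ)..1, psi1 n lam ρ * ρ ^ (2 * n) / Real.sqrt (1 - ρ ^ 2)) = 0 ↔
      ∃ m : ℕ, 1 ≤ m ∧ lam = 2 * (m : ℝ) * (2 * (m : ℝ) + 2 * (n : ℝ)) := by
  rw [P1.integral_eq n lam hlam]
  constructor
  · intro h
    rcases mul_eq_zero.1 h with h | h
    · exact absurd h (P1.J_pos n).ne'
    · by_contra hno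
      push_neg at hno
      apply P1.L_ne_zero n lam hn hlam _ h
      intro m hm heig
      exact hno m hm (by rw [heig]; ring)
  · rintro ⟨m, hm, heq2⟩
    rw [P1.L_eq_zero_of_eigen n lam hlam.le m hm (by rw [heq2]; ring), mul_zero]
end
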